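/- arXiv:1512.09308 — 4 statements merged into one kernel-verified Lean document; each statement's English description precedes it below -/
import Mathlib

section
/- Let v, v_*, w ∈ ℝ³ with w = v + v_*, and let i be a positive integer. Let i⃗, j⃗ ∈ ℝ³ be such that ((v−v_*)/|v−v_*|, i⃗/|v−v_*|, j⃗/|v−v_*|) is an orthonormal basis (v ≠ v_*), and set Γ(φ) = (cos φ) i⃗ + (sin φ) j⃗. Then (1/(2π)) ∫₀^{2π} (w·Γ(φ))^{2i} dφ = C(2i, i) [|v|²|v_*|² − (v·v_*)²]^i ≤ 2^i C(2i, i) |v|^{2i} |v_*|^{2i}. -/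
open Real Finset intervalIntegral

lemma prod_half (n : ℕ) :
    (∏ k ∈ Finset.range n, (2*(k:ℝ)+1)/(2*k+2)) = (Nat.centralBinom n : ℝ) / 4^n := by
  induction n with
  | zero => simp [Nat.centralBinom]
  | succ k ih =>
    rw [Finset.prod_range_succ, ih]
    have h := Nat.succ_mul_centralBinom_succ k
    have h' : ((k:ℝ)+1) * (Nat.centralBinom (k+1) : ℝ) = 2 * (2*k+1) * Nat.centralBinom k := by
      exact_mod_cast h
    have hk : ((k:ℝ)+1) ≠ 0 := by positivity
    field_simp
    linear_combination (-2 * (4:ℝ)^k) * h'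

lemma int_sin_even (n : ℕ) :
    (∫ x in (0:ℝ)..(2*π), Real.sin x ^ (2*n)) = 2*π * (Nat.centralBinom n : ℝ) / 4^n := by
  have h1 : (∫ x in (0:ℝ)..π, Real.sin x ^ (2*n)) = π * ((Nat.centralBinom n : ℝ) / 4^n) := by
    rw [integral_sin_pow_even, prod_half]
  have h2 : (∫ x in π..(2*π), Real.sin x ^ (2*n)) = ∫ x in (0:ℝ)..π, Real.sin x ^ (2*n) := by
    have := intervalIntegral.integral_comp_add_right (a := (0:ℝ)) (b := π)
      (f := fun x => Real.sin x ^ (2*n)) π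
    simp only [zero_add] at this
    rw [show (2*π:ℝ) = π + π by ring, ← this]
    congr 1; ext x
    rw [Real.sin_add_pi, neg_pow, pow_mul]
    norm_num
  have h3 : (∫ x in (0:ℝ)..(2*π), Real.sin x ^ (2*n))
      = (∫ x in (0:ℝ)..π, Real.sin x ^ (2*n)) + ∫ x in π..(2*π), Real.sin x ^ (2*n) := by
    rw [intervalIntegral.integral_add_adjacent_intervals] <;>
      exact (Continuous.pow (Real.continuous_sin) _).intervalIntegrable _ _
  rw [h3, h2, h1]; ring

lemma int_cos_even (n : ℕ) :
    (∫ x in (0:ℝ)..(2*π), Real.cos x ^ (2*n)) = 2*π * (Nat.centralBinom n : ℝ) / 4^n := by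
  have per : Function.Periodic (fun x => Real.sin x ^ (2*n)) (2*π) := fun x => by
    simp [Real.sin_add_two_pi]
  have h : (∫ x in (0:ℝ)..(2*π), Real.cos x ^ (2*n))
      = ∫ x in (π/2)..(π/2 + 2*π), Real.sin x ^ (2*n) := by
    have := intervalIntegral.integral_comp_add_right (a := (0:ℝ)) (b := 2*π)
      (f := fun x => Real.sin x ^ (2*n)) (π/2)
    simp only [zero_add] at this
    rw [show π/2 + 2*π = 2*π + π/2 by ring, ← this]
    congr 1; ext x
    rw [Real.sin_add_pi_div_two]
  rw [h, per.intervalIntegral_add_eq (π/2) 0, zero_add, int_sin_even]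

lemma key_integral (a c : ℝ) (n : ℕ) :
    (∫ φ in (0:ℝ)..(2*π), (a * Real.cos φ + c * Real.sin φ) ^ (2*n))
      = 2*π * (Nat.centralBinom n : ℝ) * ((a^2+c^2)/4)^n := by
  by_cases hz : a = 0 ∧ c = 0
  · obtain ⟨rfl, rfl⟩ := hz
    cases n with
    | zero => simp [Nat.centralBinom]
    | succ k => simp [Nat.mul_succ]
  · set r : ℝ := Real.sqrt (a^2+c^2) with hr
    have hr2 : r^2 = a^2+c^2 := Real.sq_sqrt (by positivity)
    have hrpos : 0 < r := by
      rcases not_and_or.mp hz with h | h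
      · exact Real.sqrt_pos.mpr (by positivity)
      · exact Real.sqrt_pos.mpr (by positivity)
    set z : ℂ := ⟨a, c⟩ with hzdef
    have hz0 : z ≠ 0 := by
      intro h0
      rw [Complex.ext_iff] at h0
      exact hz (by simpa [hzdef] using h0)
    have habs : ‖z‖ = r := by
      rw [Complex.norm_def, Complex.normSq_apply]
      simp [hzdef, hr, pow_two]
    set θ := Complex.arg z with hθ
    have hcos : Real.cos θ = a / r := by rw [hθ, Complex.cos_arg hz0, habs]
    have hsin : Real.sin θ = c / r := by rw [hθ, Complex.sin_arg, habs]
    have hform : ∀ φ : ℝ, a * Real.cos φ + c * Real.sin φ = r * Real.cos (φ - θ) := by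
      intro φ
      rw [Real.cos_sub, hcos, hsin]
      field_simp
    calc (∫ φ in (0:ℝ)..(2*π), (a * Real.cos φ + c * Real.sin φ) ^ (2*n))
        = ∫ φ in (0:ℝ)..(2*π), r^(2*n) * Real.cos (φ - θ) ^ (2*n) := by
          congr 1; ext φ; rw [hform φ, mul_pow]
      _ = r^(2*n) * ∫ φ in (0:ℝ)..(2*π), Real.cos (φ - θ) ^ (2*n) := intervalIntegral.integral_const_mul _ _
      _ = r^(2*n) * ∫ φ in (-θ)..(2*π - θ), Real.cos φ ^ (2*n) := by
          rw [intervalIntegral.integral_comp_sub_right (fun x => Real.cos x ^ (2*n)) θ]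
          norm_num
      _ = r^(2*n) * ∫ φ in (0:ℝ)..(2*π), Real.cos φ ^ (2*n) := by
          have per : Function.Periodic (fun x => Real.cos x ^ (2*n)) (2*π) := fun x => by
            simp [Real.cos_add_two_pi]
          have := per.intervalIntegral_add_eq (-θ) 0
          rw [zero_add] at this
          rw [show 2*π - θ = -θ + 2*π by ring, this]
      _ = 2*π * (Nat.centralBinom n : ℝ) * ((a^2+c^2)/4)^n := by
          rw [int_cos_even, ← hr2, pow_mul, div_pow]
          ring


/-- For `w = v + v_*` and `Γ(φ) = cos φ • i + sin φ • j` with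
`((v-v_*)/‖v-v_*‖, i/‖v-v_*‖, j/‖v-v_*‖)` orthonormal, one has
`(1/(2π)) ∫₀^{2π} (w·Γ(φ))^{2i} dφ = C(2i,i) [‖v‖²‖v_*‖² - (v·v_*)²]^i
  ≤ 2^i C(2i,i) ‖v‖^{2i} ‖v_*‖^{2i}`. -/
theorem integral_w_dot_Gamma_pow
    (v vs ivec jvec : EuclideanSpace ℝ (Fin 3)) (hne : v ≠ vs)
    (b : OrthonormalBasis (Fin 3) ℝ (EuclideanSpace ℝ (Fin 3)))
    (hb0 : b 0 = ‖v - vs‖⁻¹ • (v - vs))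
    (hb1 : b 1 = ‖v - vs‖⁻¹ • ivec) (hb2 : b 2 = ‖v - vs‖⁻¹ • jvec)
    (hi : ‖ivec‖ = ‖v - vs‖) (hj : ‖jvec‖ = ‖v - vs‖)
    (i : ℕ) (hipos : 1 ≤ i) :
    (1/(2*π)) * (∫ φ in (0:ℝ)..(2*π),
        (inner ℝ (v + vs) (Real.cos φ • ivec + Real.sin φ • jvec) : ℝ) ^ (2*i))
      = (Nat.choose (2*i) i : ℝ) * (‖v‖ ^ 2 * ‖vs‖ ^ 2 - (inner ℝ v vs : ℝ) ^ 2) ^ i ∧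
    (Nat.choose (2*i) i : ℝ) * (‖v‖ ^ 2 * ‖vs‖ ^ 2 - (inner ℝ v vs : ℝ) ^ 2) ^ i
      ≤ 2 ^ i * (Nat.choose (2*i) i : ℝ) * ‖v‖ ^ (2*i) * ‖vs‖ ^ (2*i) := by
  have hd : (0:ℝ) < ‖v - vs‖ := norm_sub_pos_iff.mpr hne
  have hdne : ‖v - vs‖ ≠ 0 := ne_of_gt hd
  set w : EuclideanSpace ℝ (Fin 3) := v + vs with hw
  set a : ℝ := inner ℝ w ivec with ha
  set c : ℝ := inner ℝ w jvec with hc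
  set X : ℝ := inner ℝ w (v - vs) with hX
  -- inner ℝ products with the basis vectors
  have e0 : (inner ℝ w (b 0) : ℝ) = ‖v - vs‖⁻¹ * X := by rw [hb0, real_inner_smul_right]
  have e1 : (inner ℝ w (b 1) : ℝ) = ‖v - vs‖⁻¹ * a := by rw [hb1, real_inner_smul_right]
  have e2 : (inner ℝ w (b 2) : ℝ) = ‖v - vs‖⁻¹ * c := by rw [hb2, real_inner_smul_right]
  have e0' : (inner ℝ (b 0) w : ℝ) = ‖v - vs‖⁻¹ * X := by rw [real_inner_comm, e0]
  have e1' : (inner ℝ (b 1) w : ℝ) = ‖v - vs‖⁻¹ * a := by rw [real_inner_comm, e1]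
  have e2' : (inner ℝ (b 2) w : ℝ) = ‖v - vs‖⁻¹ * c := by rw [real_inner_comm, e2]
  -- Parseval
  have h := b.sum_inner_mul_inner w w
  rw [Fin.sum_univ_three, e0, e0', e1, e1', e2, e2', real_inner_self_eq_norm_sq] at h
  have h3 : X^2 + a^2 + c^2 = ‖v - vs‖^2 * ‖w‖^2 := by
    have h4 := congrArg (fun t => ‖v - vs‖^2 * t) h
    calc X^2 + a^2 + c^2
        = ‖v - vs‖^2 * (‖v - vs‖⁻¹ * X * (‖v - vs‖⁻¹ * X) + ‖v - vs‖⁻¹ * a * (‖v - vs‖⁻¹ * a)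
            + ‖v - vs‖⁻¹ * c * (‖v - vs‖⁻¹ * c)) := by
          field_simp
      _ = ‖v - vs‖^2 * ‖w‖^2 := h4
  have hX' : X = ‖v‖^2 - ‖vs‖^2 := by
    rw [hX, hw, inner_sub_right, inner_add_left, inner_add_left, real_inner_self_eq_norm_sq,
      real_inner_self_eq_norm_sq, real_inner_comm vs v]
    ring
  have hd2 : ‖v - vs‖^2 = ‖v‖^2 - 2*(inner ℝ v vs : ℝ) + ‖vs‖^2 := by
    rw [@norm_sub_sq_real]
  have hw2 : ‖w‖^2 = ‖v‖^2 + 2*(inner ℝ v vs : ℝ) + ‖vs‖^2 := by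
    rw [hw, @norm_add_sq_real]
  have hac : a^2 + c^2 = 4 * (‖v‖^2 * ‖vs‖^2 - (inner ℝ v vs : ℝ)^2) := by
    rw [hd2, hw2, hX'] at h3
    linear_combination h3
  have hη : ∀ φ : ℝ, (inner ℝ w (Real.cos φ • ivec + Real.sin φ • jvec) : ℝ)
      = a * Real.cos φ + c * Real.sin φ := by
    intro φ
    rw [inner_add_right, real_inner_smul_right, real_inner_smul_right, ← ha, ← hc]
    ring
  have hint : (∫ φ in (0:ℝ)..(2*π),
      (inner ℝ w (Real.cos φ • ivec + Real.sin φ • jvec) : ℝ) ^ (2*i))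
      = 2*π * (Nat.centralBinom i : ℝ) * ((a^2+c^2)/4)^i := by
    rw [show (∫ φ in (0:ℝ)..(2*π),
        (inner ℝ w (Real.cos φ • ivec + Real.sin φ • jvec) : ℝ) ^ (2*i))
        = ∫ φ in (0:ℝ)..(2*π), (a * Real.cos φ + c * Real.sin φ) ^ (2*i) by
      congr 1; ext φ; rw [hη φ]]
    exact key_integral a c i
  have hCB : (Nat.centralBinom i : ℝ) = (Nat.choose (2*i) i : ℝ) := by
    simp [Nat.centralBinom]
  have hπ : (0:ℝ) < π := Real.pi_pos
  constructor
  · rw [hint, hac, hCB,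
      show (4*(‖v‖^2 * ‖vs‖^2 - (inner ℝ v vs : ℝ)^2))/4
          = ‖v‖^2 * ‖vs‖^2 - (inner ℝ v vs : ℝ)^2 by ring]
    field_simp
  · have hcs : (inner ℝ v vs : ℝ)^2 ≤ ‖v‖^2 * ‖vs‖^2 := by
      have h5 := real_inner_mul_inner_self_le v vs
      rw [real_inner_self_eq_norm_sq, real_inner_self_eq_norm_sq] at h5
      rw [sq]
      exact h5
    have h0 : (0:ℝ) ≤ ‖v‖^2 * ‖vs‖^2 - (inner ℝ v vs : ℝ)^2 := by linarith
    have hple : (‖v‖^2 * ‖vs‖^2 - (inner ℝ v vs : ℝ)^2)^i ≤ (‖v‖^2 * ‖vs‖^2)^i :=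
      pow_le_pow_left₀ h0 (sub_le_self _ (sq_nonneg _)) i
    have hC0 : (0:ℝ) ≤ (Nat.choose (2*i) i : ℝ) := Nat.cast_nonneg _
    have hpq : (0:ℝ) ≤ (‖v‖^2 * ‖vs‖^2)^i := by positivity
    have h2i : (1:ℝ) ≤ 2^i := one_le_pow₀ (by norm_num : (1:ℝ) ≤ 2)
    calc (Nat.choose (2*i) i : ℝ) * (‖v‖^2 * ‖vs‖^2 - (inner ℝ v vs : ℝ)^2)^i
        ≤ (Nat.choose (2*i) i : ℝ) * (‖v‖^2 * ‖vs‖^2)^i := by gcongr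
      _ ≤ 2^i * ((Nat.choose (2*i) i : ℝ) * (‖v‖^2 * ‖vs‖^2)^i) :=
          le_mul_of_one_le_left (mul_nonneg hC0 hpq) h2i
      _ = 2 ^ i * (Nat.choose (2*i) i : ℝ) * ‖v‖ ^ (2*i) * ‖vs‖ ^ (2*i) := by
          rw [pow_mul, pow_mul, mul_pow]
          ring
end

section
/- (Povzner-type estimate for even moments.) Assume I := ∫₀^{π/2} θ² β(θ) dθ < ∞ for a nonnegative measurable β on (0, π/2]. Let p = 2k with k ≥ 2 an integer. Then there is a constant Ã_p > 0 depending only on p such that for all v, v_* ∈ ℝ³, ∫₀^{π/2} ∫₀^{2π} (|v'(θ,φ)|^p + |v_*'(θ,φ)|^p − |v|^p − |v_*|^p) (dφ/2π) β(θ) dθ ≤ − A_p (|v|^p + |v_*|^p) + I Ã_p (|v|^{p−2}|v_*|² + |v_*|^{p−2}|v|²), where A_p = ∫₀^{π/2} [1 − sin(θ/2)^p − cos(θ/2)^p] β(θ) dθ > 0, and v'(θ,φ) = v + a(v,v_*,θ,φ), v_*'(θ,φ) = v_* − a(v,v_*,θ,φ) with a(v,v_*,θ,φ) = −((1−cos θ)/2)(v−v_*)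 + ((sin θ)/2)Γ(v−v_*, φ), Γ(x,φ) = (cos φ) i(x) + (sin φ) j(x) for measurable homogeneous i, j : ℝ³ → ℝ³ making (x/|x|, i(x)/|x|, j(x)/|x|) an orthonormal basis for x ≠ 0. -/
open Real MeasureTheory

/-- The deflection vector `a(v, v_*, θ, φ)` built from measurable homogeneous
completions `i, j` of `x/‖x‖` to an orthonormal basis. -/
noncomputable def collKick (ivec jvec : EuclideanSpace ℝ (Fin 3) → EuclideanSpace ℝ (Fin 3))
    (v vs : EuclideanSpace ℝ (Fin 3)) (θ φ : ℝ) : EuclideanSpace ℝ (Fin 3) :=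
  -(((1 - Real.cos θ)/2) • (v - vs))
    + ((Real.sin θ)/2) • (Real.cos φ • ivec (v - vs) + Real.sin φ • jvec (v - vs))

lemma pv_pow_mul_pow_le (x y : ℝ) (hx : 0 ≤ x) (hy : 0 ≤ y) (p q : ℕ) :
    x ^ p * y ^ q ≤ x ^ (p + q) + y ^ (p + q) := by
  rcases le_total x y with h | h
  · calc x ^ p * y ^ q ≤ y ^ p * y ^ q := by gcongr
    _ = y ^ (p + q) := by rw [← pow_add]
    _ ≤ x ^ (p + q) + y ^ (p + q) := le_add_of_nonneg_left (by positivity)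
  · calc x ^ p * y ^ q ≤ x ^ p * x ^ q := by gcongr
    _ = x ^ (p + q) := by rw [← pow_add]
    _ ≤ x ^ (p + q) + y ^ (p + q) := le_add_of_nonneg_right (by positivity)

-- L1 remainder

lemma pv_remainder (j : ℕ) (M x y : ℝ) (hx : |x| ≤ M) (hy : |y| ≤ M) :
    |(x + y) ^ (j + 2) - x ^ (j + 2) - (j + 2) * x ^ (j + 1) * y|
      ≤ 2 ^ (j + 2) * M ^ j * y ^ 2 := by
  have hM : 0 ≤ M := le_trans (abs_nonneg x) hx
  have hexp := add_pow x y (j + 2)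
  rw [Finset.sum_range_succ, Finset.sum_range_succ] at hexp
  have h1 : x ^ (j + 1) * y ^ (j + 2 - (j + 1)) * ((j + 2).choose (j + 1) : ℝ)
      = (j + 2) * x ^ (j + 1) * y := by
    simp [Nat.choose_succ_self_right]
    ring
  have h2 : x ^ (j + 2) * y ^ (j + 2 - (j + 2)) * ((j + 2).choose (j + 2) : ℝ) = x ^ (j + 2) := by
    simp
  rw [h1, h2] at hexp
  have hrem : (x + y) ^ (j + 2) - x ^ (j + 2) - (j + 2) * x ^ (j + 1) * y
      = ∑ i ∈ Finset.range (j + 1), x ^ i * y ^ (j + 2 - i) * ((j + 2).choose i : ℝ) := by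
    rw [hexp]; ring
  rw [hrem]
  calc |∑ i ∈ Finset.range (j + 1), x ^ i * y ^ (j + 2 - i) * ((j + 2).choose i : ℝ)|
      ≤ ∑ i ∈ Finset.range (j + 1), |x ^ i * y ^ (j + 2 - i) * ((j + 2).choose i : ℝ)| :=
        Finset.abs_sum_le_sum_abs _ _
    _ ≤ ∑ i ∈ Finset.range (j + 1), ((j + 2).choose i : ℝ) * (M ^ j * y ^ 2) := by
        apply Finset.sum_le_sum
        intro i hi
        have hij : i ≤ j := Nat.lt_succ_iff.mp (Finset.mem_range.mp hi)
        have hsub : j + 2 - i = (j - i) + 2 := by omega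
        rw [abs_mul, abs_mul]
        have hxb : |x ^ i| ≤ M ^ i := by rw [abs_pow]; gcongr
        have hyb : |y ^ (j + 2 - i)| ≤ M ^ (j - i) * y ^ 2 := by
          rw [hsub, pow_add, abs_mul, abs_pow, abs_pow, sq_abs]
          gcongr
        have hc : |((j + 2).choose i : ℝ)| = ((j + 2).choose i : ℝ) := abs_of_nonneg (by positivity)
        rw [hc]
        calc |x ^ i| * |y ^ (j + 2 - i)| * ((j + 2).choose i : ℝ)
            ≤ (M ^ i) * (M ^ (j - i) * y ^ 2) * ((j + 2).choose i : ℝ) := by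
              gcongr
          _ = ((j + 2).choose i : ℝ) * (M ^ (i + (j - i)) * y ^ 2) := by rw [pow_add]; ring
          _ = ((j + 2).choose i : ℝ) * (M ^ j * y ^ 2) := by rw [Nat.add_sub_cancel' hij]
    _ = (∑ i ∈ Finset.range (j + 1), ((j + 2).choose i : ℝ)) * (M ^ j * y ^ 2) := by
        rw [Finset.sum_mul]
    _ ≤ 2 ^ (j + 2) * (M ^ j * y ^ 2) := by
        have hsum : (∑ i ∈ Finset.range (j + 1), ((j + 2).choose i : ℝ)) ≤ 2 ^ (j + 2) := by
          have h := Nat.sum_range_choose (j + 2)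
          have hle : (∑ i ∈ Finset.range (j + 1), (j + 2).choose i) ≤ 2 ^ (j + 2) := by
            rw [← h]
            exact Finset.sum_le_sum_of_subset (Finset.range_subset_range.mpr (by omega))
          calc (∑ i ∈ Finset.range (j + 1), ((j + 2).choose i : ℝ))
              = ((∑ i ∈ Finset.range (j + 1), (j + 2).choose i : ℕ) : ℝ) := by push_cast; ring
            _ ≤ ((2 ^ (j + 2) : ℕ) : ℝ) := by exact_mod_cast hle
            _ = 2 ^ (j + 2) := by push_cast; ring
        have hnn : 0 ≤ M ^ j * y ^ 2 := by positivity
        exact mul_le_mul_of_nonneg_right hsum hnn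
    _ = 2 ^ (j + 2) * M ^ j * y ^ 2 := by ring

lemma pv_add_pow_le (j : ℕ) (x y : ℝ) (hx : 0 ≤ x) (hy : 0 ≤ y) :
    (x + y) ^ (j + 2) ≤ x ^ (j + 2) + y ^ (j + 2)
      + 2 ^ (j + 2) * (x ^ (j + 1) * y + x * y ^ (j + 1)) := by
  have hexp := add_pow x y (j + 2)
  rw [Finset.sum_range_succ] at hexp
  rw [Finset.sum_range_succ'] at hexp
  have h2 : x ^ (j + 2) * y ^ (j + 2 - (j + 2)) * ((j + 2).choose (j + 2) : ℝ) = x ^ (j + 2) := by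
    simp
  have h0 : x ^ 0 * y ^ (j + 2 - 0) * ((j + 2).choose 0 : ℝ) = y ^ (j + 2) := by simp
  rw [h2, h0] at hexp
  rw [hexp]
  have hmid : ∑ i ∈ Finset.range (j + 1), x ^ (i + 1) * y ^ (j + 2 - (i + 1)) * ((j + 2).choose (i + 1) : ℝ)
      ≤ 2 ^ (j + 2) * (x ^ (j + 1) * y + x * y ^ (j + 1)) := by
    calc ∑ i ∈ Finset.range (j + 1), x ^ (i + 1) * y ^ (j + 2 - (i + 1)) * ((j + 2).choose (i + 1) : ℝ)
        ≤ ∑ i ∈ Finset.range (j + 1), ((j + 2).choose (i + 1) : ℝ) * (x ^ (j + 1) * y + x * y ^ (j + 1)) := by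
          apply Finset.sum_le_sum
          intro i hi
          have hij : i ≤ j := Nat.lt_succ_iff.mp (Finset.mem_range.mp hi)
          have hsub : j + 2 - (i + 1) = (j - i) + 1 := by omega
          rw [hsub]
          have key : x ^ (i + 1) * y ^ ((j - i) + 1) ≤ x ^ (j + 1) * y + x * y ^ (j + 1) := by
            have h1 : x ^ (i + 1) * y ^ ((j - i) + 1) = (x ^ i * y ^ (j - i)) * (x * y) := by ring
            have h2 : x ^ i * y ^ (j - i) ≤ x ^ j + y ^ j := by
              have := pv_pow_mul_pow_le x y hx hy i (j - i)
              rwa [Nat.add_sub_cancel' hij] at this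
            calc x ^ (i + 1) * y ^ ((j - i) + 1) = (x ^ i * y ^ (j - i)) * (x * y) := h1
              _ ≤ (x ^ j + y ^ j) * (x * y) := by
                  apply mul_le_mul_of_nonneg_right h2 (by positivity)
              _ = x ^ (j + 1) * y + x * y ^ (j + 1) := by ring
          calc x ^ (i + 1) * y ^ ((j - i) + 1) * ((j + 2).choose (i + 1) : ℝ)
              ≤ (x ^ (j + 1) * y + x * y ^ (j + 1)) * ((j + 2).choose (i + 1) : ℝ) := by
                apply mul_le_mul_of_nonneg_right key (by positivity)
            _ = ((j + 2).choose (i + 1) : ℝ) * (x ^ (j + 1) * y + x * y ^ (j + 1)) := by ring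
      _ = (∑ i ∈ Finset.range (j + 1), ((j + 2).choose (i + 1) : ℝ)) * (x ^ (j + 1) * y + x * y ^ (j + 1)) := by
          rw [Finset.sum_mul]
      _ ≤ 2 ^ (j + 2) * (x ^ (j + 1) * y + x * y ^ (j + 1)) := by
          have hle : (∑ i ∈ Finset.range (j + 1), (j + 2).choose (i + 1)) ≤ 2 ^ (j + 2) := by
            rw [← Nat.sum_range_choose (j + 2)]
            have : (∑ i ∈ Finset.range (j + 1), (j + 2).choose (i + 1))
                = ∑ i ∈ Finset.Ico 1 (j + 2), (j + 2).choose i := by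
              rw [Finset.sum_Ico_eq_sum_range]
              simp [add_comm]
            rw [this]
            apply Finset.sum_le_sum_of_subset
            intro t ht
            simp only [Finset.mem_Ico, Finset.mem_range] at *
            omega
          have hle' : (∑ i ∈ Finset.range (j + 1), ((j + 2).choose (i + 1) : ℝ)) ≤ 2 ^ (j + 2) := by
            calc (∑ i ∈ Finset.range (j + 1), ((j + 2).choose (i + 1) : ℝ))
                = ((∑ i ∈ Finset.range (j + 1), (j + 2).choose (i + 1) : ℕ) : ℝ) := by push_cast; ring
              _ ≤ ((2 ^ (j + 2) : ℕ) : ℝ) := by exact_mod_cast hle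
              _ = 2 ^ (j + 2) := by push_cast; ring
          exact mul_le_mul_of_nonneg_right hle' (by positivity)
  linarith

-- L6 : pow Lipschitz

lemma pv_pow_lipschitz (n : ℕ) (M x y : ℝ) (hx : |x| ≤ M) (hy : |y| ≤ M) :
    |x ^ n - y ^ n| ≤ n * M ^ (n - 1) * |x - y| := by
  induction n with
  | zero => simp
  | succ m ih =>
    have hM : 0 ≤ M := le_trans (abs_nonneg x) hx
    have key : x ^ (m + 1) - y ^ (m + 1) = x ^ m * (x - y) + (x ^ m - y ^ m) * y := by ring
    calc |x ^ (m + 1) - y ^ (m + 1)| ≤ |x ^ m * (x - y)| + |(x ^ m - y ^ m) * y| := by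
          rw [key]; exact abs_add_le _ _
      _ = |x| ^ m * |x - y| + |x ^ m - y ^ m| * |y| := by rw [abs_mul, abs_mul, abs_pow]
      _ ≤ M ^ m * |x - y| + (m * M ^ (m - 1) * |x - y|) * M := by
          gcongr
      _ ≤ M ^ m * |x - y| + (m * M ^ m) * |x - y| := by
          rcases Nat.eq_zero_or_pos m with hm | hm
          · subst hm; simp
          · have : M ^ (m - 1) * M = M ^ m := by
              rw [← pow_succ]; congr 1; omega
            have h2 : (m:ℝ) * M ^ (m - 1) * |x - y| * M = (m:ℝ) * M ^ m * |x - y| := by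
              rw [← this]; ring
            linarith
      _ = (m + 1 : ℕ) * M ^ ((m + 1) - 1) * |x - y| := by rw [Nat.add_sub_cancel]; push_cast; ring

lemma pv_cs2 (p q cp sp : ℝ) (h : cp^2 + sp^2 = 1) :
    (p*cp + q*sp)^2 ≤ p^2 + q^2 := by
  nlinarith [sq_nonneg (p*sp - q*cp)]

lemma pv_ang (n : ℕ) (θ : ℝ) :
    0 ≤ 1 - Real.sin (θ/2)^(2*(n+2)) - Real.cos (θ/2)^(2*(n+2)) ∧
    1 - Real.sin (θ/2)^(2*(n+2)) - Real.cos (θ/2)^(2*(n+2)) ≤ ((n:ℝ)+2)*θ^2 := by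
  set t : ℝ := Real.sin (θ/2)^2 with ht
  have h0 : 0 ≤ t := sq_nonneg _
  have h1 : t ≤ 1 := Real.sin_sq_le_one _
  have hc : Real.cos (θ/2)^2 = 1 - t := by rw [Real.cos_sq']
  have hsp : Real.sin (θ/2)^(2*(n+2)) = t^(n+2) := by rw [pow_mul]
  have hcp : Real.cos (θ/2)^(2*(n+2)) = (1-t)^(n+2) := by rw [pow_mul, hc]
  have htθ : t ≤ θ^2 := by
    have habs : |Real.sin (θ/2)| ≤ |θ/2| := Real.abs_sin_le_abs
    have := pow_le_pow_left₀ (abs_nonneg _) habs 2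
    rw [sq_abs, sq_abs] at this
    have h2 : (θ/2)^2 ≤ θ^2 := by nlinarith [sq_nonneg θ]
    rw [ht]; linarith
  have hber : 1 - ((n:ℝ)+2)*t ≤ (1-t)^(n+2) := by
    have := one_add_mul_le_pow (a := -t) (by linarith) (n+2)
    push_cast at this
    calc 1 - ((n:ℝ)+2)*t = 1 + ((n:ℝ)+2)*(-t) := by ring
      _ ≤ (1 + -t)^(n+2) := this
      _ = (1-t)^(n+2) := by ring_nf
  have htp : t^(n+2) ≤ t := by
    calc t^(n+2) ≤ t^1 := pow_le_pow_of_le_one h0 h1 (by omega)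
      _ = t := pow_one t
  have htp0 : 0 ≤ t^(n+2) := pow_nonneg h0 _
  have hcp1 : (1-t)^(n+2) ≤ 1-t := by
    calc (1-t)^(n+2) ≤ (1-t)^1 := pow_le_pow_of_le_one (by linarith) (by linarith) (by omega)
      _ = 1-t := pow_one _
  constructor
  · rw [hsp, hcp]; linarith
  · rw [hsp, hcp]
    have : ((n:ℝ)+2)*t ≤ ((n:ℝ)+2)*θ^2 := by
      apply mul_le_mul_of_nonneg_left htθ (by positivity)
    linarith

variable {F : Type*} [NormedAddCommGroup F] [InnerProductSpace ℝ F]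

lemma pv_norm_expand (v vs iu ju : F) (c s : ℝ)
    (hcs : c ^ 2 + s ^ 2 = c)
    (hi : (inner ℝ (v - vs) iu : ℝ) = 0) (hj : (inner ℝ (v - vs) ju : ℝ) = 0)
    (hij : (inner ℝ iu ju : ℝ) = 0)
    (hni : ‖iu‖ = ‖v - vs‖) (hnj : ‖ju‖ = ‖v - vs‖) (cφ sφ : ℝ) (hφ : cφ ^ 2 + sφ ^ 2 = 1) :
    ‖v + (-(c • (v - vs)) + s • (cφ • iu + sφ • ju))‖ ^ 2
      = (1 - c) * ‖v‖ ^ 2 + c * ‖vs‖ ^ 2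
        + 2 * s * ((inner ℝ v iu : ℝ) * cφ + (inner ℝ v ju : ℝ) * sφ)
    ∧ ‖vs - (-(c • (v - vs)) + s • (cφ • iu + sφ • ju))‖ ^ 2
      = c * ‖v‖ ^ 2 + (1 - c) * ‖vs‖ ^ 2
        - 2 * s * ((inner ℝ v iu : ℝ) * cφ + (inner ℝ v ju : ℝ) * sφ) := by
  set u : F := v - vs with hu
  set X : F := cφ • iu + sφ • ju with hX
  set a : ℝ := ‖v‖ ^ 2 with ha
  set b : ℝ := ‖vs‖ ^ 2 with hb
  set w : ℝ := inner ℝ v vs with hw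
  set p : ℝ := inner ℝ v iu with hp
  set q : ℝ := inner ℝ v ju with hq
  have hXsq : ‖X‖ ^ 2 = ‖u‖ ^ 2 := by
    rw [hX, norm_add_sq_real, real_inner_smul_left, real_inner_smul_right, hij,
      norm_smul, norm_smul, mul_pow, mul_pow, hni, hnj]
    simp only [Real.norm_eq_abs, sq_abs]
    linear_combination ‖u‖ ^ 2 * hφ
  have husq : ‖u‖ ^ 2 = a - 2 * w + b := by
    rw [hu, norm_sub_sq_real]; try ring
  have hvu : (inner ℝ v u : ℝ) = a - w := by
    rw [hu, inner_sub_right, real_inner_self_eq_norm_sq]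
  have hvsu : (inner ℝ vs u : ℝ) = w - b := by
    rw [hu, inner_sub_right, real_inner_self_eq_norm_sq, real_inner_comm]
  have huiu : (inner ℝ u iu : ℝ) = 0 := hi
  have huju : (inner ℝ u ju : ℝ) = 0 := hj
  have hvX : (inner ℝ v X : ℝ) = cφ * p + sφ * q := by
    rw [hX, inner_add_right, real_inner_smul_right, real_inner_smul_right]
  have huX : (inner ℝ u X : ℝ) = 0 := by
    rw [hX, inner_add_right, real_inner_smul_right, real_inner_smul_right, huiu, huju]
    ring
  have hvsX : (inner ℝ vs X : ℝ) = cφ * p + sφ * q := by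
    have h : (inner ℝ vs X : ℝ) = inner ℝ v X - inner ℝ u X := by
      rw [hu, inner_sub_left]; ring
    rw [h, hvX, huX]; ring
  have huXs : (inner ℝ u (s • X) : ℝ) = 0 := by
    rw [real_inner_smul_right, huX]; ring
  constructor
  · have e1 : v + (-(c • u) + s • X) = (v - c • u) + s • X := by abel
    rw [e1, norm_add_sq_real, norm_sub_sq_real, real_inner_smul_right, norm_smul,
      norm_smul, mul_pow, mul_pow, inner_sub_left, real_inner_smul_right,
      real_inner_smul_left, hvu, hvX, huXs, hXsq, husq, ← ha]
    simp only [Real.norm_eq_abs, sq_abs]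
    linear_combination (a - 2 * w + b) * hcs
  · have e1 : vs - (-(c • u) + s • X) = (vs + c • u) - s • X := by abel
    rw [e1, norm_sub_sq_real, norm_add_sq_real, real_inner_smul_right, norm_smul,
      norm_smul, mul_pow, mul_pow, inner_add_left, real_inner_smul_right,
      real_inner_smul_left, hvsu, hvsX, huXs, hXsq, husq, ← hb]
    simp only [Real.norm_eq_abs, sq_abs]
    linear_combination (a - 2 * w + b) * hcs

set_option maxHeartbeats 1000000 in
lemma pv_inner_estimate (j : ℕ)
    (ivec jvec : EuclideanSpace ℝ (Fin 3) → EuclideanSpace ℝ (Fin 3))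
    (hihom : ∀ (lam : ℝ) (x : EuclideanSpace ℝ (Fin 3)), ivec (lam • x) = lam • ivec x)
    (hjhom : ∀ (lam : ℝ) (x : EuclideanSpace ℝ (Fin 3)), jvec (lam • x) = lam • jvec x)
    (hortho : ∀ x : EuclideanSpace ℝ (Fin 3), x ≠ 0 →
      (inner ℝ x (ivec x) : ℝ) = 0 ∧ (inner ℝ x (jvec x) : ℝ) = 0 ∧
      (inner ℝ (ivec x) (jvec x) : ℝ) = 0 ∧ ‖ivec x‖ = ‖x‖ ∧ ‖jvec x‖ = ‖x‖)
    (v vs : EuclideanSpace ℝ (Fin 3)) (θ : ℝ) (hθ0 : 0 < θ) (hθ1 : θ ≤ π/2) :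
    (∫ φ in (0:ℝ)..(2*π),
       (‖v + collKick ivec jvec v vs θ φ‖ ^ (2*(j+2))
         + ‖vs - collKick ivec jvec v vs θ φ‖ ^ (2*(j+2))
         - ‖v‖ ^ (2*(j+2)) - ‖vs‖ ^ (2*(j+2))) / (2*π))
      ≤ -(1 - Real.sin (θ/2) ^ (2*(j+2)) - Real.cos (θ/2) ^ (2*(j+2)))
          * (‖v‖ ^ (2*(j+2)) + ‖vs‖ ^ (2*(j+2)))
        + 2^(2*j+8) * 3^(j+2) * θ^2
          * (‖v‖ ^ (2*(j+2) - 2) * ‖vs‖ ^ 2 + ‖vs‖ ^ (2*(j+2) - 2) * ‖v‖ ^ 2)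
    ∧ |∫ φ in (0:ℝ)..(2*π),
       (‖v + collKick ivec jvec v vs θ φ‖ ^ (2*(j+2))
         + ‖vs - collKick ivec jvec v vs θ φ‖ ^ (2*(j+2))
         - ‖v‖ ^ (2*(j+2)) - ‖vs‖ ^ (2*(j+2))) / (2*π)|
      ≤ (2*(j+2)*(‖v‖^2+‖vs‖^2)^(j+2)
          + 2^(2*j+8) * 3^(j+2)
            * (‖v‖ ^ (2*(j+2) - 2) * ‖vs‖ ^ 2 + ‖vs‖ ^ (2*(j+2) - 2) * ‖v‖ ^ 2)) * θ^2 := by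
  have hπ : (0:ℝ) < π := Real.pi_pos
  set u : EuclideanSpace ℝ (Fin 3) := v - vs with hu
  set iu : EuclideanSpace ℝ (Fin 3) := ivec u with hiu
  set ju : EuclideanSpace ℝ (Fin 3) := jvec u with hju
  -- orthogonality facts, including u = 0 case
  have hfacts : (inner ℝ u iu : ℝ) = 0 ∧ (inner ℝ u ju : ℝ) = 0 ∧
      (inner ℝ iu ju : ℝ) = 0 ∧ ‖iu‖ = ‖u‖ ∧ ‖ju‖ = ‖u‖ := by
    rcases eq_or_ne u 0 with h0 | h0
    · have hi0 : iu = 0 := by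
        rw [hiu, h0]
        have := hihom 0 0
        simpa using this
      have hj0 : ju = 0 := by
        rw [hju, h0]
        have := hjhom 0 0
        simpa using this
      refine ⟨?_, ?_, ?_, ?_, ?_⟩ <;> simp [hi0, hj0, h0]
    · exact hortho u h0
  obtain ⟨hoi, hoj, hoij, hni, hnj⟩ := hfacts
  set c : ℝ := (1 - Real.cos θ)/2 with hc
  set s : ℝ := Real.sin θ / 2 with hs
  have hcs : c ^ 2 + s ^ 2 = c := by
    rw [hc, hs]
    linear_combination (Real.sin_sq_add_cos_sq θ)/4
  set a : ℝ := ‖v‖^2 with ha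
  set b : ℝ := ‖vs‖^2 with hb
  set p : ℝ := (inner ℝ v iu : ℝ) with hp
  set q : ℝ := (inner ℝ v ju : ℝ) with hq
  have ha0 : 0 ≤ a := by positivity
  have hb0 : 0 ≤ b := by positivity
  set E : ℝ := a + b with hE
  have hE0 : 0 ≤ E := by positivity
  set X : ℝ := a^(j+1)*b + b^(j+1)*a with hX
  have hX0 : 0 ≤ X := by positivity
  -- basic bounds on c, s
  have hθpi : θ ≤ π := by linarith
  have hcos0 : 0 ≤ Real.cos θ := Real.cos_nonneg_of_mem_Icc ⟨by linarith, hθ1⟩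
  have hcos1 : Real.cos θ ≤ 1 := Real.cos_le_one θ
  have hc0 : 0 ≤ c := by rw [hc]; linarith
  have hc1 : c ≤ 1 := by rw [hc]; linarith
  have hcθ : c ≤ θ^2 := by
    have := Real.one_sub_sq_div_two_le_cos (x := θ)
    rw [hc]; linarith [sq_nonneg θ]
  have hsin0 : 0 ≤ Real.sin θ := Real.sin_nonneg_of_nonneg_of_le_pi hθ0.le hθpi
  have hsin1 : Real.sin θ ≤ 1 := Real.sin_le_one θ
  have hsinθ : Real.sin θ ≤ θ := Real.sin_le hθ0.le
  set A1 : ℝ := (1-c)*a + c*b with hA1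
  set A2 : ℝ := c*a + (1-c)*b with hA2
  have hmix1 : 0 ≤ (1-c)*a + c*b :=
    add_nonneg (mul_nonneg (by linarith) ha0) (mul_nonneg hc0 hb0)
  have hmix2 : 0 ≤ c*a + (1-c)*b :=
    add_nonneg (mul_nonneg hc0 ha0) (mul_nonneg (by linarith) hb0)
  have hA10 : 0 ≤ A1 := by rw [hA1]; linarith
  have hA1E : A1 ≤ E := by rw [hA1, hE]; linarith
  have hA20 : 0 ≤ A2 := by rw [hA2]; linarith
  have hA2E : A2 ≤ E := by rw [hA2, hE]; linarith
  set W : ℝ → ℝ := fun φ => 2*s*(p*Real.cos φ + q*Real.sin φ) with hW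
  -- norm expansions
  have hexp : ∀ φ : ℝ, ‖v + collKick ivec jvec v vs θ φ‖ ^ 2 = A1 + W φ
      ∧ ‖vs - collKick ivec jvec v vs θ φ‖ ^ 2 = A2 - W φ := by
    intro φ
    have hφ1 : Real.cos φ ^ 2 + Real.sin φ ^ 2 = 1 := Real.cos_sq_add_sin_sq φ
    have h := pv_norm_expand v vs iu ju c s hcs hoi hoj hoij hni hnj
      (Real.cos φ) (Real.sin φ) hφ1
    have hK : collKick ivec jvec v vs θ φ
        = -(c • (v - vs)) + s • (Real.cos φ • iu + Real.sin φ • ju) := rfl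
    constructor
    · rw [hK, h.1, hA1, hW]; try ring
    · rw [hK, h.2, hA2, hW]; try ring
  -- pointwise bounds on W
  have hpE : |p| ≤ (3/2)*E := by
    have h1 : |p| ≤ ‖v‖ * ‖iu‖ := abs_real_inner_le_norm v iu
    have h2 : ‖u‖ ≤ ‖v‖ + ‖vs‖ := by rw [hu]; exact norm_sub_le v vs
    have h3 : ‖v‖ * ‖vs‖ ≤ (a + b)/2 := by
      rw [ha, hb]; linarith [sq_nonneg (‖v‖ - ‖vs‖)]
    rw [hni] at h1
    have h4 : ‖v‖ * ‖u‖ ≤ ‖v‖ * (‖v‖ + ‖vs‖) :=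
      mul_le_mul_of_nonneg_left h2 (norm_nonneg v)
    rw [hE]; linarith [ha.ge, ha.le, hb.ge, hb.le]
  have hqE : |q| ≤ (3/2)*E := by
    have h1 : |q| ≤ ‖v‖ * ‖ju‖ := abs_real_inner_le_norm v ju
    have h2 : ‖u‖ ≤ ‖v‖ + ‖vs‖ := by rw [hu]; exact norm_sub_le v vs
    have h3 : ‖v‖ * ‖vs‖ ≤ (a + b)/2 := by
      rw [ha, hb]; linarith [sq_nonneg (‖v‖ - ‖vs‖)]
    rw [hnj] at h1
    have h4 : ‖v‖ * ‖u‖ ≤ ‖v‖ * (‖v‖ + ‖vs‖) :=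
      mul_le_mul_of_nonneg_left h2 (norm_nonneg v)
    rw [hE]; linarith [ha.ge, ha.le, hb.ge, hb.le]
  have hWabs : ∀ φ : ℝ, |W φ| ≤ 3*E := by
    intro φ
    have hcb : |Real.cos φ| ≤ 1 := Real.abs_cos_le_one φ
    have hsb : |Real.sin φ| ≤ 1 := Real.abs_sin_le_one φ
    have h2s : 0 ≤ 2*s := by rw [hs]; linarith
    have h2s1 : 2*s ≤ 1 := by rw [hs]; linarith
    have : |W φ| = (2*s) * |p*Real.cos φ + q*Real.sin φ| := by
      rw [hW]; rw [abs_mul]; congr 1; rw [abs_of_nonneg h2s]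
    rw [this]
    have hin : |p*Real.cos φ + q*Real.sin φ| ≤ |p| + |q| := by
      calc |p*Real.cos φ + q*Real.sin φ| ≤ |p*Real.cos φ| + |q*Real.sin φ| := abs_add_le _ _
        _ = |p| * |Real.cos φ| + |q| * |Real.sin φ| := by rw [abs_mul, abs_mul]
        _ ≤ |p| * 1 + |q| * 1 :=
            add_le_add (mul_le_mul_of_nonneg_left hcb (abs_nonneg p))
              (mul_le_mul_of_nonneg_left hsb (abs_nonneg q))
        _ = |p| + |q| := by ring
    calc (2*s) * |p*Real.cos φ + q*Real.sin φ| ≤ 1 * (|p| + |q|) := by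
          apply mul_le_mul h2s1 hin (abs_nonneg _) (by norm_num)
      _ ≤ 3*E := by linarith [hpE, hqE]
  have hWsq : ∀ φ : ℝ, (W φ)^2 ≤ (Real.sin θ)^2 * (p^2 + q^2) := by
    intro φ
    have hφ1 : Real.cos φ ^ 2 + Real.sin φ ^ 2 = 1 := Real.cos_sq_add_sin_sq φ
    have h1 : (p*Real.cos φ + q*Real.sin φ)^2 ≤ p^2 + q^2 := pv_cs2 _ _ _ _ hφ1
    have h2 : (W φ)^2 = (2*s)^2 * (p*Real.cos φ + q*Real.sin φ)^2 := by rw [hW]; ring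
    have h3 : (2*s)^2 = (Real.sin θ)^2 := by rw [hs]; ring
    rw [h2, h3]
    exact mul_le_mul_of_nonneg_left h1 (sq_nonneg _)
  -- p, q bounds with min
  have husq2 : ‖u‖^2 ≤ 2*E := by
    have h2 : ‖u‖ ≤ ‖v‖ + ‖vs‖ := by rw [hu]; exact norm_sub_le v vs
    have h4 : ‖u‖^2 ≤ (‖v‖ + ‖vs‖)^2 := pow_le_pow_left₀ (norm_nonneg u) h2 2
    have h5 : (‖v‖ + ‖vs‖)^2 ≤ 2*(‖v‖^2 + ‖vs‖^2) := by
      linarith [sq_nonneg (‖v‖ - ‖vs‖)]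
    rw [hE]; linarith [ha.ge, ha.le, hb.ge, hb.le]
  have hpqmin : p^2 + q^2 ≤ 4*E*(min a b) := by
    have hpa : p^2 ≤ a * ‖u‖^2 := by
      have h1 : |p| ≤ ‖v‖ * ‖iu‖ := abs_real_inner_le_norm v iu
      rw [hni] at h1
      calc p^2 = |p|^2 := (sq_abs p).symm
        _ ≤ (‖v‖ * ‖u‖)^2 := pow_le_pow_left₀ (abs_nonneg p) h1 2
        _ = a * ‖u‖^2 := by rw [ha]; ring
    have hqa : q^2 ≤ a * ‖u‖^2 := by
      have h1 : |q| ≤ ‖v‖ * ‖ju‖ := abs_real_inner_le_norm v ju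
      rw [hnj] at h1
      calc q^2 = |q|^2 := (sq_abs q).symm
        _ ≤ (‖v‖ * ‖u‖)^2 := pow_le_pow_left₀ (abs_nonneg q) h1 2
        _ = a * ‖u‖^2 := by rw [ha]; ring
    have hvs_i : (inner ℝ vs iu : ℝ) = p := by
      rw [hp]
      have hsum : (inner ℝ v iu : ℝ) = inner ℝ vs iu + inner ℝ u iu := by
        rw [hu, ← inner_add_left]; norm_num
      rw [hsum, hoi]; ring
    have hvs_j : (inner ℝ vs ju : ℝ) = q := by
      rw [hq]
      have hsum : (inner ℝ v ju : ℝ) = inner ℝ vs ju + inner ℝ u ju := by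
        rw [hu, ← inner_add_left]; norm_num
      rw [hsum, hoj]; ring
    have hpb : p^2 ≤ b * ‖u‖^2 := by
      have h1 : |(inner ℝ vs iu : ℝ)| ≤ ‖vs‖ * ‖iu‖ := abs_real_inner_le_norm vs iu
      rw [hni, hvs_i] at h1
      calc p^2 = |p|^2 := (sq_abs p).symm
        _ ≤ (‖vs‖ * ‖u‖)^2 := pow_le_pow_left₀ (abs_nonneg p) h1 2
        _ = b * ‖u‖^2 := by rw [hb]; ring
    have hqb : q^2 ≤ b * ‖u‖^2 := by
      have h1 : |(inner ℝ vs ju : ℝ)| ≤ ‖vs‖ * ‖ju‖ := abs_real_inner_le_norm vs ju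
      rw [hnj, hvs_j] at h1
      calc q^2 = |q|^2 := (sq_abs q).symm
        _ ≤ (‖vs‖ * ‖u‖)^2 := pow_le_pow_left₀ (abs_nonneg q) h1 2
        _ = b * ‖u‖^2 := by rw [hb]; ring
    rcases le_total a b with hab | hab
    · rw [min_eq_left hab]
      have hm := mul_le_mul_of_nonneg_left husq2 ha0
      linarith [hpa, hqa, hm]
    · rw [min_eq_right hab]
      have hm := mul_le_mul_of_nonneg_left husq2 hb0
      linarith [hpb, hqb, hm]
  have hEminX : E^(j+1) * (min a b) ≤ 2^(j+1) * X := by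
    have h2p : (0:ℝ) ≤ 2^(j+1) := by positivity
    rcases le_total a b with hab | hab
    · rw [min_eq_left hab]
      have hE2b : E ≤ 2*b := by rw [hE]; linarith
      have hEp : E^(j+1) ≤ (2*b)^(j+1) := pow_le_pow_left₀ hE0 hE2b _
      calc E^(j+1) * a ≤ (2*b)^(j+1) * a := mul_le_mul_of_nonneg_right hEp ha0
        _ = 2^(j+1) * (b^(j+1)*a) := by rw [mul_pow]; ring
        _ ≤ 2^(j+1) * X := by
            have hgz : (0:ℝ) ≤ a^(j+1)*b := by positivity
            have : b^(j+1)*a ≤ X := by rw [hX]; linarith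
            exact mul_le_mul_of_nonneg_left this h2p
    · rw [min_eq_right hab]
      have hE2a : E ≤ 2*a := by rw [hE]; linarith
      have hEp : E^(j+1) ≤ (2*a)^(j+1) := pow_le_pow_left₀ hE0 hE2a _
      calc E^(j+1) * b ≤ (2*a)^(j+1) * b := mul_le_mul_of_nonneg_right hEp hb0
        _ = 2^(j+1) * (a^(j+1)*b) := by rw [mul_pow]; ring
        _ ≤ 2^(j+1) * X := by
            have hgz : (0:ℝ) ≤ b^(j+1)*a := by positivity
            have : a^(j+1)*b ≤ X := by rw [hX]; linarith
            exact mul_le_mul_of_nonneg_left this h2p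
  -- the function F and its decomposition
  set F : ℝ → ℝ := fun φ => (A1 + W φ)^(j+2) + (A2 - W φ)^(j+2) - a^(j+2) - b^(j+2) with hF
  have hWc : Continuous W := by
    rw [hW]
    exact (continuous_const.mul ((continuous_const.mul Real.continuous_cos).add
      (continuous_const.mul Real.continuous_sin)))
  have hFc : Continuous F := by
    rw [hF]
    exact ((((continuous_const.add hWc).pow _).add
      ((continuous_const.sub hWc).pow _)).sub continuous_const).sub continuous_const
  have hIW : (∫ φ in (0:ℝ)..(2*π), W φ) = 0 := by
    have hWeq : Set.EqOn (fun φ => W φ)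
        (fun φ => (2*s*p)*Real.cos φ + (2*s*q)*Real.sin φ) (Set.uIcc 0 (2*π)) := by
      intro φ _
      simp only [hW]; ring
    rw [intervalIntegral.integral_congr hWeq,
      intervalIntegral.integral_add (f := fun φ => (2*s*p)*Real.cos φ) (g := fun φ => (2*s*q)*Real.sin φ) ((continuous_const.mul Real.continuous_cos).intervalIntegrable _ _)
        ((continuous_const.mul Real.continuous_sin).intervalIntegrable _ _),
      intervalIntegral.integral_const_mul, intervalIntegral.integral_const_mul,
      integral_cos, integral_sin]
    simp [Real.sin_two_pi, Real.cos_two_pi]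
  set D : ℝ := A1^(j+2) + A2^(j+2) - a^(j+2) - b^(j+2) with hD
  set Lc : ℝ := ((j:ℝ)+2)*A1^(j+1) - ((j:ℝ)+2)*A2^(j+1) with hLc
  set RB : ℝ := 2^(j+3)*(3*E)^j*(Real.sin θ)^2*(p^2+q^2) with hRB
  have hrpt : ∀ φ : ℝ, |F φ - (D + Lc * W φ)| ≤ RB := by
    intro φ
    have hWle : |W φ| ≤ 3*E := hWabs φ
    have hA1le : |A1| ≤ 3*E := by rw [abs_of_nonneg hA10]; linarith
    have hA2le : |A2| ≤ 3*E := by rw [abs_of_nonneg hA20]; linarith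
    have h1 := pv_remainder j (3*E) A1 (W φ) hA1le hWle
    have h2 := pv_remainder j (3*E) A2 (-(W φ)) hA2le (by rwa [abs_neg])
    have hid : F φ - (D + Lc * W φ)
        = ((A1 + W φ)^(j+2) - A1^(j+2) - ((j:ℝ)+2)*A1^(j+1)*(W φ))
          + ((A2 + -(W φ))^(j+2) - A2^(j+2) - ((j:ℝ)+2)*A2^(j+1)*(-(W φ))) := by
      simp only [hF, hD, hLc]; ring
    have hfac : (0:ℝ) ≤ 2^(j+2)*(3*E)^j := by positivity
    have h3 : (W φ)^2 ≤ (Real.sin θ)^2*(p^2+q^2) := hWsq φ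
    have h4 : 2^(j+2)*(3*E)^j*(W φ)^2 ≤ 2^(j+2)*(3*E)^j*((Real.sin θ)^2*(p^2+q^2)) := by
      calc 2^(j+2)*(3*E)^j*(W φ)^2 = (2^(j+2)*(3*E)^j)*(W φ)^2 := by ring
        _ ≤ (2^(j+2)*(3*E)^j)*((Real.sin θ)^2*(p^2+q^2)) := mul_le_mul_of_nonneg_left h3 hfac
        _ = 2^(j+2)*(3*E)^j*((Real.sin θ)^2*(p^2+q^2)) := by ring
    have hneg : (-(W φ))^2 = (W φ)^2 := by ring
    rw [hneg] at h2
    push_cast at h1 h2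
    calc |F φ - (D + Lc * W φ)|
        = |((A1 + W φ)^(j+2) - A1^(j+2) - ((j:ℝ)+2)*A1^(j+1)*(W φ))
            + ((A2 + -(W φ))^(j+2) - A2^(j+2) - ((j:ℝ)+2)*A2^(j+1)*(-(W φ)))| := by rw [hid]
      _ ≤ |((A1 + W φ)^(j+2) - A1^(j+2) - ((j:ℝ)+2)*A1^(j+1)*(W φ))|
            + |((A2 + -(W φ))^(j+2) - A2^(j+2) - ((j:ℝ)+2)*A2^(j+1)*(-(W φ)))| := abs_add_le _ _
      _ ≤ 2^(j+2)*(3*E)^j*(W φ)^2 + 2^(j+2)*(3*E)^j*(W φ)^2 := by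
          exact add_le_add h1 h2
      _ ≤ 2*(2^(j+2)*(3*E)^j*((Real.sin θ)^2*(p^2+q^2))) := by linarith [h4]
      _ = RB := by rw [hRB, pow_succ]; ring
  have hFint : IntervalIntegrable F MeasureTheory.volume 0 (2*π) :=
    hFc.intervalIntegrable _ _
  have hGint2 : IntervalIntegrable (fun φ => D + Lc * W φ) MeasureTheory.volume 0 (2*π) :=
    (continuous_const.add (continuous_const.mul hWc)).intervalIntegrable _ _
  have hIDL : (∫ φ in (0:ℝ)..(2*π), (D + Lc * W φ)) = 2*π*D := by
    rw [intervalIntegral.integral_add (f := fun _ => D) (g := fun φ => Lc * W φ) (intervalIntegrable_const)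
      ((continuous_const.mul hWc).intervalIntegrable _ _),
      intervalIntegral.integral_const_mul, hIW, intervalIntegral.integral_const]
    simp
    try ring
  have h2π : (0:ℝ) < 2*π := by positivity
  have hIr : |(∫ φ in (0:ℝ)..(2*π), F φ) - 2*π*D| ≤ RB*(2*π) := by
    have h6 : (∫ φ in (0:ℝ)..(2*π), (F φ - (D + Lc * W φ)))
        = (∫ φ in (0:ℝ)..(2*π), F φ) - 2*π*D := by
      rw [intervalIntegral.integral_sub hFint hGint2, hIDL]
    rw [← h6]
    have h7 := intervalIntegral.norm_integral_le_of_norm_le_const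
      (C := RB) (f := fun φ => F φ - (D + Lc * W φ)) (a := 0) (b := 2*π)
      (fun x _ => by rw [Real.norm_eq_abs]; exact hrpt x)
    rw [Real.norm_eq_abs, sub_zero, abs_of_pos h2π] at h7
    exact h7
  have hstmt : (∫ φ in (0:ℝ)..(2*π),
       (‖v + collKick ivec jvec v vs θ φ‖ ^ (2*(j+2))
         + ‖vs - collKick ivec jvec v vs θ φ‖ ^ (2*(j+2))
         - ‖v‖ ^ (2*(j+2)) - ‖vs‖ ^ (2*(j+2))) / (2*π))
      = (∫ φ in (0:ℝ)..(2*π), F φ) / (2*π) := by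
    rw [intervalIntegral.integral_div]
    congr 1
    apply intervalIntegral.integral_congr
    intro φ _
    simp only [hF]
    rw [pow_mul, pow_mul, pow_mul, pow_mul, (hexp φ).1, (hexp φ).2, ← ha, ← hb]
  have hGD : |(∫ φ in (0:ℝ)..(2*π), F φ) / (2*π) - D| ≤ RB := by
    have heq : (∫ φ in (0:ℝ)..(2*π), F φ) / (2*π) - D
        = ((∫ φ in (0:ℝ)..(2*π), F φ) - 2*π*D)/(2*π) := by field_simp
    rw [heq, abs_div, abs_of_pos h2π, div_le_iff₀ h2π]
    exact hIr
  -- upper bound for D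
  have hDub : D ≤ (c^(j+2) + (1-c)^(j+2) - 1)*(a^(j+2)+b^(j+2)) + 2^(j+3)*(c*X) := by
    have h1c : (0:ℝ) ≤ 1 - c := by linarith
    have hx1 : (1-c)^(j+1)*c ≤ c :=
      mul_le_of_le_one_left hc0 (pow_le_one₀ h1c (by linarith))
    have hcj : c^(j+1) ≤ c := by
      calc c^(j+1) ≤ c^1 := pow_le_pow_of_le_one hc0 hc1 (by omega)
        _ = c := pow_one c
    have hx2 : (1-c)*c^(j+1) ≤ c := by
      calc (1-c)*c^(j+1) ≤ 1*c^(j+1) :=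
            mul_le_mul_of_nonneg_right (by linarith) (pow_nonneg hc0 _)
        _ = c^(j+1) := one_mul _
        _ ≤ c := hcj
    have hb1 := pv_add_pow_le j ((1-c)*a) (c*b) (mul_nonneg h1c ha0) (mul_nonneg hc0 hb0)
    have hb2 := pv_add_pow_le j (c*a) ((1-c)*b) (mul_nonneg hc0 ha0) (mul_nonneg h1c hb0)
    have e1 : ((1-c)*a)^(j+1)*(c*b) ≤ c*(a^(j+1)*b) := by
      calc ((1-c)*a)^(j+1)*(c*b) = ((1-c)^(j+1)*c)*(a^(j+1)*b) := by rw [mul_pow]; ring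
        _ ≤ c*(a^(j+1)*b) := mul_le_mul_of_nonneg_right hx1 (by positivity)
    have e2 : ((1-c)*a)*((c*b)^(j+1)) ≤ c*(b^(j+1)*a) := by
      calc ((1-c)*a)*((c*b)^(j+1)) = ((1-c)*c^(j+1))*(b^(j+1)*a) := by rw [mul_pow]; ring
        _ ≤ c*(b^(j+1)*a) := mul_le_mul_of_nonneg_right hx2 (by positivity)
    have e3 : ((c*a))^(j+1)*((1-c)*b) ≤ c*(a^(j+1)*b) := by
      calc ((c*a))^(j+1)*((1-c)*b) = (c^(j+1)*(1-c))*(a^(j+1)*b) := by rw [mul_pow]; ring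
        _ ≤ c*(a^(j+1)*b) := mul_le_mul_of_nonneg_right (by linarith [hx2]) (by positivity)
    have e4 : ((c*a))*(((1-c)*b)^(j+1)) ≤ c*(b^(j+1)*a) := by
      calc ((c*a))*(((1-c)*b)^(j+1)) = ((1-c)^(j+1)*c)*(b^(j+1)*a) := by rw [mul_pow]; ring
        _ ≤ c*(b^(j+1)*a) := mul_le_mul_of_nonneg_right hx1 (by positivity)
    have hp2 : (0:ℝ) ≤ 2^(j+2) := by positivity
    have hm1 : 2^(j+2)*(((1-c)*a)^(j+1)*(c*b) + ((1-c)*a)*((c*b)^(j+1)))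
        ≤ 2^(j+2)*(c*(a^(j+1)*b) + c*(b^(j+1)*a)) :=
      mul_le_mul_of_nonneg_left (add_le_add e1 e2) hp2
    have hm2 : 2^(j+2)*(((c*a))^(j+1)*((1-c)*b) + ((c*a))*(((1-c)*b)^(j+1)))
        ≤ 2^(j+2)*(c*(a^(j+1)*b) + c*(b^(j+1)*a)) :=
      mul_le_mul_of_nonneg_left (add_le_add e3 e4) hp2
    have hA1pow : A1^(j+2) ≤ (1-c)^(j+2)*a^(j+2) + c^(j+2)*b^(j+2)
        + 2^(j+2)*(c*(a^(j+1)*b) + c*(b^(j+1)*a)) := by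
      rw [hA1]
      calc ((1-c)*a + c*b)^(j+2)
          ≤ ((1-c)*a)^(j+2) + (c*b)^(j+2)
            + 2^(j+2)*(((1-c)*a)^(j+1)*(c*b) + ((1-c)*a)*((c*b)^(j+1))) := hb1
        _ ≤ (1-c)^(j+2)*a^(j+2) + c^(j+2)*b^(j+2)
            + 2^(j+2)*(c*(a^(j+1)*b) + c*(b^(j+1)*a)) := by
            rw [mul_pow, mul_pow]; linarith [hm1]
    have hA2pow : A2^(j+2) ≤ c^(j+2)*a^(j+2) + (1-c)^(j+2)*b^(j+2)
        + 2^(j+2)*(c*(a^(j+1)*b) + c*(b^(j+1)*a)) := by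
      rw [hA2]
      calc (c*a + (1-c)*b)^(j+2)
          ≤ (c*a)^(j+2) + ((1-c)*b)^(j+2)
            + 2^(j+2)*((c*a)^(j+1)*((1-c)*b) + (c*a)*(((1-c)*b)^(j+1))) := hb2
        _ ≤ c^(j+2)*a^(j+2) + (1-c)^(j+2)*b^(j+2)
            + 2^(j+2)*(c*(a^(j+1)*b) + c*(b^(j+1)*a)) := by
            rw [mul_pow, mul_pow]; linarith [hm2]
    have h6 : (2:ℝ)^(j+3)*(c*(a^(j+1)*b + b^(j+1)*a))
        = 2*(2^(j+2)*(c*(a^(j+1)*b + b^(j+1)*a))) := by rw [pow_succ]; ring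
    rw [hD, hX]
    linarith [hA1pow, hA2pow, h6]
  -- |D| bound
  have habsE : ∀ x : ℝ, 0 ≤ x → x ≤ E → |x| ≤ E := fun x h1 h2 => by
    rw [abs_of_nonneg h1]; exact h2
  have haE : a ≤ E := by rw [hE]; linarith
  have hbE : b ≤ E := by rw [hE]; linarith
  have hbaE : |b - a| ≤ E := by
    rw [abs_le]; constructor <;> [linarith [hE.le, hE.ge]; linarith [hE.le, hE.ge]]
  have habE : |a - b| ≤ E := by
    rw [abs_le]; constructor <;> [linarith [hE.le, hE.ge]; linarith [hE.le, hE.ge]]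
  have hDabs : |D| ≤ 2*((j:ℝ)+2)*θ^2*E^(j+2) := by
    have hl1 := pv_pow_lipschitz (j+2) E A1 a (habsE A1 hA10 hA1E) (habsE a ha0 haE)
    have hl2 := pv_pow_lipschitz (j+2) E A2 b (habsE A2 hA20 hA2E) (habsE b hb0 hbE)
    have hsub : (j+2) - 1 = j+1 := by omega
    rw [hsub] at hl1 hl2
    push_cast at hl1 hl2
    have hd1 : |A1 - a| ≤ θ^2*E := by
      have he : A1 - a = c*(b-a) := by rw [hA1]; ring
      rw [he, abs_mul, abs_of_nonneg hc0]
      exact mul_le_mul hcθ hbaE (abs_nonneg _) (sq_nonneg θ)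
    have hd2 : |A2 - b| ≤ θ^2*E := by
      have he : A2 - b = c*(a-b) := by rw [hA2]; ring
      rw [he, abs_mul, abs_of_nonneg hc0]
      exact mul_le_mul hcθ habE (abs_nonneg _) (sq_nonneg θ)
    have hnn : (0:ℝ) ≤ ((j:ℝ)+2)*E^(j+1) := by positivity
    have hm1 : ((j:ℝ)+2)*E^(j+1)*|A1 - a| ≤ ((j:ℝ)+2)*E^(j+1)*(θ^2*E) := by
      exact mul_le_mul_of_nonneg_left hd1 hnn
    have hm2 : ((j:ℝ)+2)*E^(j+1)*|A2 - b| ≤ ((j:ℝ)+2)*E^(j+1)*(θ^2*E) := by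
      exact mul_le_mul_of_nonneg_left hd2 hnn
    have hEE : E^(j+1)*E = E^(j+2) := by rw [← pow_succ]
    have hDid : D = (A1^(j+2) - a^(j+2)) + (A2^(j+2) - b^(j+2)) := by rw [hD]; ring
    calc |D| = |(A1^(j+2) - a^(j+2)) + (A2^(j+2) - b^(j+2))| := by rw [hDid]
      _ ≤ |A1^(j+2) - a^(j+2)| + |A2^(j+2) - b^(j+2)| := abs_add_le _ _
      _ ≤ 2*((j:ℝ)+2)*θ^2*E^(j+2) := by
          have e1 : ((j:ℝ)+2)*E^(j+1)*(θ^2*E) = ((j:ℝ)+2)*θ^2*E^(j+2) := by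
            rw [← hEE]; ring
          linarith [hl1, hl2, hm1, hm2, e1.le, e1.ge]
  -- RB bound by θ² X
  have hsinsq : (Real.sin θ)^2 ≤ θ^2 := by
    have := pow_le_pow_left₀ hsin0 hsinθ 2
    linarith [this]
  have hRBle : RB ≤ 2^(2*j+6)*3^j*(θ^2*X) := by
    have hEj : (0:ℝ) ≤ E^j := pow_nonneg hE0 j
    have hstep1 : E^j*(p^2+q^2) ≤ E^j*(4*E*(min a b)) :=
      mul_le_mul_of_nonneg_left hpqmin hEj
    have hstep2 : (Real.sin θ)^2*(E^j*(p^2+q^2)) ≤ θ^2*(E^j*(4*E*(min a b))) := by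
      apply mul_le_mul hsinsq hstep1 (by positivity) (sq_nonneg θ)
    have hnn2 : (0:ℝ) ≤ 2^(j+3)*3^j := by positivity
    have hmin0 : 0 ≤ min a b := le_min ha0 hb0
    have hstep3 : E^j*(4*E*(min a b)) = 4*(E^(j+1)*(min a b)) := by
      rw [pow_succ]; ring
    have hstep4 : 4*(E^(j+1)*(min a b)) ≤ 4*(2^(j+1)*X) := by
      linarith [hEminX]
    have hstep5 : θ^2*(E^j*(4*E*(min a b))) ≤ θ^2*(4*(2^(j+1)*X)) := by
      rw [hstep3]
      exact mul_le_mul_of_nonneg_left hstep4 (sq_nonneg θ)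
    calc RB = 2^(j+3)*3^j*((Real.sin θ)^2*(E^j*(p^2+q^2))) := by
          rw [hRB, mul_pow]; ring
      _ ≤ 2^(j+3)*3^j*(θ^2*(E^j*(4*E*(min a b)))) :=
          mul_le_mul_of_nonneg_left hstep2 hnn2
      _ ≤ 2^(j+3)*3^j*(θ^2*(4*(2^(j+1)*X))) :=
          mul_le_mul_of_nonneg_left hstep5 hnn2
      _ = 2^(2*j+6)*3^j*(θ^2*X) := by
          have : (2:ℝ)^(2*j+6) = 2^(j+3)*4*2^(j+1) := by
            rw [show (4:ℝ) = 2^2 by norm_num, ← pow_add, ← pow_add]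
            congr 1
            omega
          rw [this]; ring
  -- conversions to statement form
  have hs2 : Real.sin (θ/2)^2 = c := by
    rw [Real.sin_sq, Real.cos_sq, show 2*(θ/2) = θ by ring, hc]; ring
  have hc2 : Real.cos (θ/2)^2 = 1 - c := by
    rw [Real.cos_sq, show 2*(θ/2) = θ by ring, hc]; ring
  have hsin2k : Real.sin (θ/2) ^ (2*(j+2)) = c^(j+2) := by rw [pow_mul, hs2]
  have hcos2k : Real.cos (θ/2) ^ (2*(j+2)) = (1-c)^(j+2) := by rw [pow_mul, hc2]
  have hv2k : ‖v‖ ^ (2*(j+2)) = a^(j+2) := by rw [pow_mul, ← ha]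
  have hvs2k : ‖vs‖ ^ (2*(j+2)) = b^(j+2) := by rw [pow_mul, ← hb]
  have hX2k : ‖v‖ ^ (2*(j+2) - 2) * ‖vs‖ ^ 2 + ‖vs‖ ^ (2*(j+2) - 2) * ‖v‖ ^ 2 = X := by
    rw [show 2*(j+2) - 2 = 2*(j+1) by omega, pow_mul, pow_mul, ← ha, ← hb, hX]
  -- coefficient comparisons
  have hcoef : (2:ℝ)^(j+3) + 2^(2*j+6)*3^j ≤ 2^(2*j+8)*3^(j+2) := by
    have c2 : (1:ℝ) ≤ 3^j := one_le_pow₀ (by norm_num)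
    have c1 : (2:ℝ)^(j+3) ≤ 2^(2*j+6) := by
      apply pow_le_pow_right₀ (by norm_num)
      omega
    have c3 : (2:ℝ)^(j+3) ≤ 2^(2*j+6)*3^j := by
      calc (2:ℝ)^(j+3) = 2^(j+3)*1 := by ring
        _ ≤ 2^(2*j+6)*3^j := mul_le_mul c1 c2 (by norm_num) (by positivity)
    have c4 : (2:ℝ)^(2*j+6)*3^j + 2^(2*j+6)*3^j ≤ 2^(2*j+8)*3^(j+2) := by
      have e1 : (2:ℝ)^(2*j+8) = 4*2^(2*j+6) := by
        rw [show 2*j+8 = (2*j+6)+2 by omega, pow_add]; ring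
      have e2 : (3:ℝ)^(j+2) = 9*3^j := by rw [pow_add]; ring
      rw [e1, e2]
      have h10 : (0:ℝ) ≤ 2^(2*j+6)*3^j := by positivity
      linarith [h10]
    linarith
  have hG1 : (∫ φ in (0:ℝ)..(2*π), F φ) / (2*π) ≤ D + RB := by
    have := (abs_le.mp hGD).2
    linarith
  have hGabs : |(∫ φ in (0:ℝ)..(2*π), F φ) / (2*π)| ≤ |D| + RB := by
    have h1 := (abs_le.mp hGD).1
    have h2 := (abs_le.mp hGD).2
    rw [abs_le]
    constructor
    · have := neg_abs_le D
      linarith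
    · have := le_abs_self D
      linarith
  have hθX : 2^(j+3)*(c*X) ≤ 2^(j+3)*(θ^2*X) := by
    apply mul_le_mul_of_nonneg_left _ (by positivity : (0:ℝ) ≤ 2^(j+3))
    exact mul_le_mul_of_nonneg_right hcθ hX0
  constructor
  · rw [hstmt, hsin2k, hcos2k, hv2k, hvs2k, hX2k]
    clear_value u iu ju c s a b p q E X A1 A2 W F D Lc RB
    have hsum : 2^(j+3)*(θ^2*X) + 2^(2*j+6)*3^j*(θ^2*X) ≤ 2^(2*j+8)*3^(j+2)*(θ^2*X) := by
      have h9 : (0:ℝ) ≤ θ^2*X := mul_nonneg (sq_nonneg θ) hX0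
      have := mul_le_mul_of_nonneg_right hcoef h9
      linarith [this]
    have final : (∫ φ in (0:ℝ)..(2*π), F φ) / (2*π)
        ≤ (c^(j+2) + (1-c)^(j+2) - 1)*(a^(j+2)+b^(j+2)) + 2^(2*j+8)*3^(j+2)*(θ^2*X) := by
      linarith [hG1, hDub, hRBle, hθX, hsum]
    linarith [final]
  · rw [hstmt, hX2k]
    clear_value u iu ju c s a b p q E X A1 A2 W F D Lc RB
    have hsum2 : 2^(2*j+6)*3^j*(θ^2*X) ≤ 2^(2*j+8)*3^(j+2)*X*θ^2 := by
      have c2 : (1:ℝ) ≤ 3^j := one_le_pow₀ (by norm_num)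
      have c5 : (2:ℝ)^(2*j+6)*3^j ≤ 2^(2*j+8)*3^(j+2) := by
        have e1 : (2:ℝ)^(2*j+8) = 4*2^(2*j+6) := by
          rw [show 2*j+8 = (2*j+6)+2 by omega, pow_add]; ring
        have e2 : (3:ℝ)^(j+2) = 9*3^j := by rw [pow_add]; ring
        rw [e1, e2]
        have h10 : (0:ℝ) ≤ (2:ℝ)^(2*j+6)*3^j := by positivity
        linarith [h10]
      have h9 : (0:ℝ) ≤ θ^2*X := mul_nonneg (sq_nonneg θ) hX0
      have := mul_le_mul_of_nonneg_right c5 h9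
      linarith [this]
    have hDa : |D| ≤ 2*((j:ℝ)+2)*E^(j+2)*θ^2 := by
      have : 2*((j:ℝ)+2)*θ^2*E^(j+2) = 2*((j:ℝ)+2)*E^(j+2)*θ^2 := by ring
      linarith [hDabs]
    calc |(∫ φ in (0:ℝ)..(2*π), F φ) / (2*π)| ≤ |D| + RB := hGabs
      _ ≤ 2*((j:ℝ)+2)*E^(j+2)*θ^2 + 2^(2*j+8)*3^(j+2)*X*θ^2 := by
          linarith [hDa, hRBle, hsum2]
      _ = (2*((j:ℝ)+2)*E^(j+2) + 2^(2*j+8)*3^(j+2)*X)*θ^2 := by ring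

set_option maxHeartbeats 1000000 in
/-- Povzner-type estimate for even moments `p = 2k`, `k ≥ 2`: there is a constant
`Ã_p > 0` depending only on `p` such that, for every admissible angular kernel `β`
with `I = ∫ θ² β(θ) dθ < ∞` and `A_p = ∫ (1 - sin(θ/2)^p - cos(θ/2)^p) β(θ) dθ > 0`,
and all `v, v_*`,
`∫∫ (|v'|^p + |v_*'|^p - |v|^p - |v_*|^p) (dφ/2π) β(θ)dθ
   ≤ -A_p (|v|^p + |v_*|^p) + I Ã_p (|v|^{p-2}|v_*|² + |v_*|^{p-2}|v|²)`. -/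
theorem povzner_even_moments (k : ℕ) (hk : 2 ≤ k) :
    ∃ C > (0:ℝ),
      ∀ (β : ℝ → ℝ)
        (ivec jvec : EuclideanSpace ℝ (Fin 3) → EuclideanSpace ℝ (Fin 3)),
        Measurable β → (∀ θ ∈ Set.Ioc (0:ℝ) (π/2), 0 ≤ β θ) →
        IntegrableOn (fun θ => θ ^ 2 * β θ) (Set.Ioc (0:ℝ) (π/2)) →
        Measurable ivec → Measurable jvec →
        (∀ (lam : ℝ) (x : EuclideanSpace ℝ (Fin 3)), ivec (lam • x) = lam • ivec x) →
        (∀ (lam : ℝ) (x : EuclideanSpace ℝ (Fin 3)), jvec (lam • x) = lam • jvec x) →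
        (∀ x : EuclideanSpace ℝ (Fin 3), x ≠ 0 →
          (inner ℝ x (ivec x) : ℝ) = 0 ∧ (inner ℝ x (jvec x) : ℝ) = 0 ∧
          (inner ℝ (ivec x) (jvec x) : ℝ) = 0 ∧ ‖ivec x‖ = ‖x‖ ∧ ‖jvec x‖ = ‖x‖) →
        0 < (∫ θ in Set.Ioc (0:ℝ) (π/2),
              (1 - Real.sin (θ/2) ^ (2*k) - Real.cos (θ/2) ^ (2*k)) * β θ) →
        ∀ v vs : EuclideanSpace ℝ (Fin 3),
          (∫ θ in Set.Ioc (0:ℝ) (π/2),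
            (∫ φ in (0:ℝ)..(2*π),
              (‖v + collKick ivec jvec v vs θ φ‖ ^ (2*k)
                + ‖vs - collKick ivec jvec v vs θ φ‖ ^ (2*k)
                - ‖v‖ ^ (2*k) - ‖vs‖ ^ (2*k)) / (2*π)) * β θ)
          ≤ - (∫ θ in Set.Ioc (0:ℝ) (π/2),
                (1 - Real.sin (θ/2) ^ (2*k) - Real.cos (θ/2) ^ (2*k)) * β θ)
              * (‖v‖ ^ (2*k) + ‖vs‖ ^ (2*k))
            + (∫ θ in Set.Ioc (0:ℝ) (π/2), θ ^ 2 * β θ) * C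
              * (‖v‖ ^ (2*k - 2) * ‖vs‖ ^ 2 + ‖vs‖ ^ (2*k - 2) * ‖v‖ ^ 2) := by
  obtain ⟨j, rfl⟩ : ∃ j, k = j + 2 := ⟨k - 2, by omega⟩
  refine ⟨2^(2*j+8)*3^(j+2), by positivity, ?_⟩
  intro β ivec jvec hβm hβ0 hβint _him _hjm hihom hjhom hortho _hApos v vs
  have hest := fun (θ : ℝ) (hθ : θ ∈ Set.Ioc (0:ℝ) (π/2)) =>
    pv_inner_estimate j ivec jvec hihom hjhom hortho v vs θ hθ.1 hθ.2
  -- continuity of the inner ℝ integral in θ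
  have hGcont : Continuous (fun θ : ℝ => ∫ φ in (0:ℝ)..(2*π),
      (‖v + collKick ivec jvec v vs θ φ‖ ^ (2*(j+2))
        + ‖vs - collKick ivec jvec v vs θ φ‖ ^ (2*(j+2))
        - ‖v‖ ^ (2*(j+2)) - ‖vs‖ ^ (2*(j+2))) / (2*π)) := by
    apply intervalIntegral.continuous_parametric_intervalIntegral_of_continuous'
    unfold collKick Function.uncurry
    fun_prop
  -- notation
  set Sp : ℝ := ‖v‖ ^ (2*(j+2)) + ‖vs‖ ^ (2*(j+2)) with hSp
  set Xn : ℝ := ‖v‖ ^ (2*(j+2) - 2) * ‖vs‖ ^ 2 + ‖vs‖ ^ (2*(j+2) - 2) * ‖v‖ ^ 2 with hXn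
  set K : ℝ := 2*(j+2)*(‖v‖^2+‖vs‖^2)^(j+2) + 2^(2*j+8) * 3^(j+2) * Xn with hK
  have hSp0 : 0 ≤ Sp := by rw [hSp]; positivity
  have hXn0 : 0 ≤ Xn := by rw [hXn]; positivity
  have hK0 : 0 ≤ K := by rw [hK]; positivity
  -- integrability of the angular factor
  have hang : IntegrableOn (fun θ =>
      (1 - Real.sin (θ/2) ^ (2*(j+2)) - Real.cos (θ/2) ^ (2*(j+2))) * β θ)
      (Set.Ioc (0:ℝ) (π/2)) := by
    apply Integrable.mono' (g := fun θ => ((j:ℝ)+2)*(θ^2*β θ)) (hβint.const_mul _)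
    · exact (((by fun_prop : Continuous fun θ : ℝ =>
        1 - Real.sin (θ/2) ^ (2*(j+2)) - Real.cos (θ/2) ^ (2*(j+2))).measurable.mul
        hβm).aestronglyMeasurable)
    · rw [ae_restrict_iff' measurableSet_Ioc]
      apply ae_of_all
      intro θ hθ
      have h0 := (pv_ang j θ).1
      have h1 := (pv_ang j θ).2
      have hb := hβ0 θ hθ
      rw [Real.norm_eq_abs, abs_mul, abs_of_nonneg h0, abs_of_nonneg hb]
      calc (1 - Real.sin (θ/2) ^ (2*(j+2)) - Real.cos (θ/2) ^ (2*(j+2))) * β θ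
          ≤ (((j:ℝ)+2)*θ^2) * β θ := mul_le_mul_of_nonneg_right h1 hb
        _ = ((j:ℝ)+2)*(θ^2*β θ) := by ring
  -- integrability of the LHS integrand
  have hGint : IntegrableOn (fun θ => (∫ φ in (0:ℝ)..(2*π),
      (‖v + collKick ivec jvec v vs θ φ‖ ^ (2*(j+2))
        + ‖vs - collKick ivec jvec v vs θ φ‖ ^ (2*(j+2))
        - ‖v‖ ^ (2*(j+2)) - ‖vs‖ ^ (2*(j+2))) / (2*π)) * β θ)
      (Set.Ioc (0:ℝ) (π/2)) := by
    apply Integrable.mono' (g := fun θ => K*(θ^2*β θ)) (hβint.const_mul _)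
    · exact (hGcont.measurable.mul hβm).aestronglyMeasurable
    · rw [ae_restrict_iff' measurableSet_Ioc]
      apply ae_of_all
      intro θ hθ
      have h2 := (hest θ hθ).2
      have hb := hβ0 θ hθ
      rw [Real.norm_eq_abs, abs_mul, abs_of_nonneg hb]
      calc |∫ φ in (0:ℝ)..(2*π),
            (‖v + collKick ivec jvec v vs θ φ‖ ^ (2*(j+2))
              + ‖vs - collKick ivec jvec v vs θ φ‖ ^ (2*(j+2))
              - ‖v‖ ^ (2*(j+2)) - ‖vs‖ ^ (2*(j+2))) / (2*π)| * β θ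
          ≤ (K * θ^2) * β θ := mul_le_mul_of_nonneg_right h2 hb
        _ = K*(θ^2*β θ) := by ring
  -- pointwise comparison and integral monotonicity
  have hmono : (∫ θ in Set.Ioc (0:ℝ) (π/2),
      (∫ φ in (0:ℝ)..(2*π),
        (‖v + collKick ivec jvec v vs θ φ‖ ^ (2*(j+2))
          + ‖vs - collKick ivec jvec v vs θ φ‖ ^ (2*(j+2))
          - ‖v‖ ^ (2*(j+2)) - ‖vs‖ ^ (2*(j+2))) / (2*π)) * β θ)
      ≤ ∫ θ in Set.Ioc (0:ℝ) (π/2),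
        ((-Sp)*((1 - Real.sin (θ/2) ^ (2*(j+2)) - Real.cos (θ/2) ^ (2*(j+2))) * β θ)
          + (2^(2*j+8) * 3^(j+2) * Xn)*(θ^2*β θ)) := by
    apply setIntegral_mono_on hGint
      ((hang.const_mul (-Sp)).add (hβint.const_mul (2^(2*j+8) * 3^(j+2) * Xn)))
      measurableSet_Ioc
    intro θ hθ
    have h1 := (hest θ hθ).1
    have hb := hβ0 θ hθ
    have hmul := mul_le_mul_of_nonneg_right h1 hb
    calc (∫ φ in (0:ℝ)..(2*π),
        (‖v + collKick ivec jvec v vs θ φ‖ ^ (2*(j+2))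
          + ‖vs - collKick ivec jvec v vs θ φ‖ ^ (2*(j+2))
          - ‖v‖ ^ (2*(j+2)) - ‖vs‖ ^ (2*(j+2))) / (2*π)) * β θ
        ≤ (-(1 - Real.sin (θ/2) ^ (2*(j+2)) - Real.cos (θ/2) ^ (2*(j+2))) * Sp
            + 2^(2*j+8) * 3^(j+2) * θ^2 * Xn) * β θ := hmul
      _ = (-Sp)*((1 - Real.sin (θ/2) ^ (2*(j+2)) - Real.cos (θ/2) ^ (2*(j+2))) * β θ)
          + (2^(2*j+8) * 3^(j+2) * Xn)*(θ^2*β θ) := by ring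
  -- compute the RHS integral
  have hsplit : (∫ θ in Set.Ioc (0:ℝ) (π/2),
        ((-Sp)*((1 - Real.sin (θ/2) ^ (2*(j+2)) - Real.cos (θ/2) ^ (2*(j+2))) * β θ)
          + (2^(2*j+8) * 3^(j+2) * Xn)*(θ^2*β θ)))
      = (-Sp)*(∫ θ in Set.Ioc (0:ℝ) (π/2),
          (1 - Real.sin (θ/2) ^ (2*(j+2)) - Real.cos (θ/2) ^ (2*(j+2))) * β θ)
        + (2^(2*j+8) * 3^(j+2) * Xn)*(∫ θ in Set.Ioc (0:ℝ) (π/2), θ^2*β θ) := by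
    rw [integral_add (hang.const_mul (-Sp)) (hβint.const_mul (2^(2*j+8) * 3^(j+2) * Xn)),
      integral_const_mul, integral_const_mul]
  calc (∫ θ in Set.Ioc (0:ℝ) (π/2),
      (∫ φ in (0:ℝ)..(2*π),
        (‖v + collKick ivec jvec v vs θ φ‖ ^ (2*(j+2))
          + ‖vs - collKick ivec jvec v vs θ φ‖ ^ (2*(j+2))
          - ‖v‖ ^ (2*(j+2)) - ‖vs‖ ^ (2*(j+2))) / (2*π)) * β θ)
      ≤ (-Sp)*(∫ θ in Set.Ioc (0:ℝ) (π/2),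
          (1 - Real.sin (θ/2) ^ (2*(j+2)) - Real.cos (θ/2) ^ (2*(j+2))) * β θ)
        + (2^(2*j+8) * 3^(j+2) * Xn)*(∫ θ in Set.Ioc (0:ℝ) (π/2), θ^2*β θ) := by
        rw [← hsplit]; exact hmono
    _ = - (∫ θ in Set.Ioc (0:ℝ) (π/2),
            (1 - Real.sin (θ/2) ^ (2*(j+2)) - Real.cos (θ/2) ^ (2*(j+2))) * β θ) * Sp
        + (∫ θ in Set.Ioc (0:ℝ) (π/2), θ^2*β θ) * (2^(2*j+8)*3^(j+2)) * Xn := by ring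
end

section
/- Let μ, ν ∈ P₂(ℝ³) be probability measures with finite second moment, and let M_μ = ∫ v dμ, S_μ² = ∫ |v − M_μ|² dμ (similarly for ν). Then (S_μ − S_ν)² + |M_μ − M_ν|² ≤ W₂²(μ, ν), where W₂ is the quadratic Wasserstein distance. -/
open Real MeasureTheory
open scoped RealInnerProductSpace

section Helpers

variable {α : Type*} [MeasurableSpace α] {ρ : Measure α}
variable {H : Type*} [NormedAddCommGroup H] [InnerProductSpace ℝ H]

lemma integrable_norm_mul_norm {f g : α → H} (hf : MemLp f 2 ρ) (hg : MemLp g 2 ρ) :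
    Integrable (fun x => ‖f x‖ * ‖g x‖) ρ := by
  have hf2 : Integrable (fun x => ‖f x‖ ^ 2) ρ :=
    (memLp_two_iff_integrable_sq_norm hf.1).mp hf
  have hg2 : Integrable (fun x => ‖g x‖ ^ 2) ρ :=
    (memLp_two_iff_integrable_sq_norm hg.1).mp hg
  refine (hf2.add hg2).mono' (hf.1.norm.mul hg.1.norm) ?_
  filter_upwards with x
  simp only [Pi.add_apply]
  have h1 : (0:ℝ) ≤ ‖f x‖ * ‖g x‖ := mul_nonneg (norm_nonneg _) (norm_nonneg _)
  rw [Real.norm_of_nonneg h1]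
  nlinarith [sq_nonneg (‖f x‖ - ‖g x‖)]

lemma integrable_inner' {f g : α → H} (hf : MemLp f 2 ρ) (hg : MemLp g 2 ρ) :
    Integrable (fun x => ⟪f x, g x⟫) ρ := by
  refine (integrable_norm_mul_norm hf hg).mono' (hf.1.inner hg.1) ?_
  filter_upwards with x
  rw [Real.norm_eq_abs]
  exact abs_real_inner_le_norm _ _

lemma integral_inner_le_sqrt {f g : α → H} (hf : MemLp f 2 ρ) (hg : MemLp g 2 ρ) :
    ∫ x, ⟪f x, g x⟫ ∂ρ
      ≤ Real.sqrt (∫ x, ‖f x‖ ^ 2 ∂ρ) * Real.sqrt (∫ x, ‖g x‖ ^ 2 ∂ρ) := by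
  have h1 : ∫ x, ⟪f x, g x⟫ ∂ρ ≤ ∫ x, ‖f x‖ * ‖g x‖ ∂ρ := by
    refine integral_mono (integrable_inner' hf hg) (integrable_norm_mul_norm hf hg) ?_
    intro x
    exact real_inner_le_norm _ _
  have hpq : Real.HolderConjugate 2 2 := Real.HolderConjugate.two_two
  have h2 := integral_mul_le_Lp_mul_Lq_of_nonneg (μ := ρ) hpq
    (f := fun x => ‖f x‖) (g := fun x => ‖g x‖)
    (Filter.Eventually.of_forall fun x => norm_nonneg _)
    (Filter.Eventually.of_forall fun x => norm_nonneg _)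
    (by simpa using hf.norm) (by simpa using hg.norm)
  refine h1.trans (h2.trans_eq ?_)
  rw [Real.sqrt_eq_rpow, Real.sqrt_eq_rpow]
  norm_num [Real.rpow_two]

/-- Reverse triangle-type inequality in L²:
`(‖f‖₂ - ‖g‖₂)² ≤ ∫ ‖f - g‖²`. -/
lemma sq_sqrt_sub_le {f g : α → H} (hf : MemLp f 2 ρ) (hg : MemLp g 2 ρ) :
    (Real.sqrt (∫ x, ‖f x‖ ^ 2 ∂ρ) - Real.sqrt (∫ x, ‖g x‖ ^ 2 ∂ρ)) ^ 2
      ≤ ∫ x, ‖f x - g x‖ ^ 2 ∂ρ := by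
  have hf2 : Integrable (fun x => ‖f x‖ ^ 2) ρ :=
    (memLp_two_iff_integrable_sq_norm hf.1).mp hf
  have hg2 : Integrable (fun x => ‖g x‖ ^ 2) ρ :=
    (memLp_two_iff_integrable_sq_norm hg.1).mp hg
  have hinner : Integrable (fun x => ⟪f x, g x⟫) ρ := integrable_inner' hf hg
  have hexp : ∫ x, ‖f x - g x‖ ^ 2 ∂ρ
      = ∫ x, ‖f x‖ ^ 2 ∂ρ - 2 * ∫ x, ⟪f x, g x⟫ ∂ρ + ∫ x, ‖g x‖ ^ 2 ∂ρ := by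
    have he : (fun x => ‖f x - g x‖ ^ 2)
        = fun x => ‖f x‖ ^ 2 - 2 * ⟪f x, g x⟫ + ‖g x‖ ^ 2 :=
      funext fun x => norm_sub_sq_real _ _
    have h1 : Integrable (fun x => ‖f x‖ ^ 2 - 2 * ⟪f x, g x⟫) ρ := by
      exact hf2.sub (hinner.const_mul 2)
    have h2 : Integrable (fun x => 2 * ⟪f x, g x⟫) ρ := hinner.const_mul 2
    rw [he, integral_add h1 hg2, integral_sub hf2 h2, integral_const_mul]
  have hA : (0:ℝ) ≤ ∫ x, ‖f x‖ ^ 2 ∂ρ := integral_nonneg fun x => by positivity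
  have hB : (0:ℝ) ≤ ∫ x, ‖g x‖ ^ 2 ∂ρ := integral_nonneg fun x => by positivity
  have hCS := integral_inner_le_sqrt hf hg
  rw [hexp, sub_sq, Real.sq_sqrt hA, Real.sq_sqrt hB]
  nlinarith

end Helpers

/-- Squared quadratic Wasserstein "distance": infimum over couplings of the
quadratic transport cost. -/
noncomputable def W2sq (μ ν : Measure (EuclideanSpace ℝ (Fin 3))) : ℝ :=
  ⨅ πc : {πc : Measure (EuclideanSpace ℝ (Fin 3) × EuclideanSpace ℝ (Fin 3)) //
      πc.map Prod.fst = μ ∧ πc.map Prod.snd = ν},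
    ∫ p, ‖p.1 - p.2‖ ^ 2 ∂(πc : Measure (EuclideanSpace ℝ (Fin 3) × EuclideanSpace ℝ (Fin 3)))

/-- Mean–standard deviation lower bound for the Wasserstein distance:
`(S_μ - S_ν)² + |M_μ - M_ν|² ≤ W₂²(μ, ν)`. -/
theorem mean_var_le_W2sq (μ ν : Measure (EuclideanSpace ℝ (Fin 3)))
    [IsProbabilityMeasure μ] [IsProbabilityMeasure ν]
    (hμ2 : Integrable (fun v : EuclideanSpace ℝ (Fin 3) => ‖v‖ ^ 2) μ)
    (hν2 : Integrable (fun v : EuclideanSpace ℝ (Fin 3) => ‖v‖ ^ 2) ν) :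
    (Real.sqrt (∫ v, ‖v - ∫ w, w ∂μ‖ ^ 2 ∂μ)
        - Real.sqrt (∫ v, ‖v - ∫ w, w ∂ν‖ ^ 2 ∂ν)) ^ 2
      + ‖(∫ w, w ∂μ) - ∫ w, w ∂ν‖ ^ 2
      ≤ W2sq μ ν := by
  have hne : Nonempty {πc : Measure (EuclideanSpace ℝ (Fin 3) × EuclideanSpace ℝ (Fin 3)) //
      πc.map Prod.fst = μ ∧ πc.map Prod.snd = ν} :=
    ⟨⟨μ.prod ν, by simp, by simp⟩⟩
  rw [W2sq]
  refine le_ciInf ?_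
  rintro ⟨ρ, hρ1, hρ2⟩
  simp only
  haveI : IsProbabilityMeasure ρ := by
    constructor
    have := congrArg (fun m : Measure (EuclideanSpace ℝ (Fin 3)) => m Set.univ) hρ1
    simpa [Measure.map_apply measurable_fst MeasurableSet.univ] using this
  have hfst : MeasurePreserving Prod.fst ρ μ := ⟨measurable_fst, hρ1⟩
  have hsnd : MeasurePreserving Prod.snd ρ ν := ⟨measurable_snd, hρ2⟩
  have hidμ : MemLp (fun v : EuclideanSpace ℝ (Fin 3) => v) 2 μ :=
    (memLp_two_iff_integrable_sq_norm aestronglyMeasurable_id).mpr hμ2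
  have hidν : MemLp (fun v : EuclideanSpace ℝ (Fin 3) => v) 2 ν :=
    (memLp_two_iff_integrable_sq_norm aestronglyMeasurable_id).mpr hν2
  have hXm : MemLp (fun p : EuclideanSpace ℝ (Fin 3) × EuclideanSpace ℝ (Fin 3) => p.1) 2 ρ := by
    exact hidμ.comp_measurePreserving hfst
  have hYm : MemLp (fun p : EuclideanSpace ℝ (Fin 3) × EuclideanSpace ℝ (Fin 3) => p.2) 2 ρ := by
    exact hidν.comp_measurePreserving hsnd
  set Mμ : EuclideanSpace ℝ (Fin 3) := ∫ w, w ∂μ with hMμ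
  set Mν : EuclideanSpace ℝ (Fin 3) := ∫ w, w ∂ν with hMν
  have hX : MemLp (fun p : EuclideanSpace ℝ (Fin 3) × EuclideanSpace ℝ (Fin 3) => p.1 - Mμ) 2 ρ :=
    hXm.sub (memLp_const _)
  have hY : MemLp (fun p : EuclideanSpace ℝ (Fin 3) × EuclideanSpace ℝ (Fin 3) => p.2 - Mν) 2 ρ :=
    hYm.sub (memLp_const _)
  have hmX : ∫ p : EuclideanSpace ℝ (Fin 3) × EuclideanSpace ℝ (Fin 3), p.1 ∂ρ = Mμ := by
    rw [hMμ, ← hρ1]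
    exact (integral_map measurable_fst.aemeasurable aestronglyMeasurable_id).symm
  have hmY : ∫ p : EuclideanSpace ℝ (Fin 3) × EuclideanSpace ℝ (Fin 3), p.2 ∂ρ = Mν := by
    rw [hMν, ← hρ2]
    exact (integral_map measurable_snd.aemeasurable aestronglyMeasurable_id).symm
  have hSμ : ∫ p : EuclideanSpace ℝ (Fin 3) × EuclideanSpace ℝ (Fin 3), ‖p.1 - Mμ‖ ^ 2 ∂ρ
      = ∫ v, ‖v - Mμ‖ ^ 2 ∂μ := by
    rw [← hρ1]
    exact (integral_map measurable_fst.aemeasurable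
      (((continuous_id.sub continuous_const).norm.pow 2).aestronglyMeasurable :
        AEStronglyMeasurable (fun v : EuclideanSpace ℝ (Fin 3) => ‖v - Mμ‖ ^ 2)
        (ρ.map Prod.fst))).symm
  have hSν : ∫ p : EuclideanSpace ℝ (Fin 3) × EuclideanSpace ℝ (Fin 3), ‖p.2 - Mν‖ ^ 2 ∂ρ
      = ∫ v, ‖v - Mν‖ ^ 2 ∂ν := by
    rw [← hρ2]
    exact (integral_map measurable_snd.aemeasurable
      (((continuous_id.sub continuous_const).norm.pow 2).aestronglyMeasurable :
        AEStronglyMeasurable (fun v : EuclideanSpace ℝ (Fin 3) => ‖v - Mν‖ ^ 2)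
        (ρ.map Prod.snd))).symm
  have hZ : MemLp (fun p : EuclideanSpace ℝ (Fin 3) × EuclideanSpace ℝ (Fin 3) =>
      (p.1 - Mμ) - (p.2 - Mν)) 2 ρ := hX.sub hY
  have hZ2 : Integrable (fun p : EuclideanSpace ℝ (Fin 3) × EuclideanSpace ℝ (Fin 3) =>
      ‖(p.1 - Mμ) - (p.2 - Mν)‖ ^ 2) ρ := (memLp_two_iff_integrable_sq_norm hZ.1).mp hZ
  have hZc : Integrable (fun p : EuclideanSpace ℝ (Fin 3) × EuclideanSpace ℝ (Fin 3) =>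
      ⟪(p.1 - Mμ) - (p.2 - Mν), Mμ - Mν⟫) ρ := integrable_inner' hZ (memLp_const _)
  have hdec : ∫ p : EuclideanSpace ℝ (Fin 3) × EuclideanSpace ℝ (Fin 3), ‖p.1 - p.2‖ ^ 2 ∂ρ
      = (∫ p : EuclideanSpace ℝ (Fin 3) × EuclideanSpace ℝ (Fin 3),
            ‖(p.1 - Mμ) - (p.2 - Mν)‖ ^ 2 ∂ρ)
        + 2 * (∫ p : EuclideanSpace ℝ (Fin 3) × EuclideanSpace ℝ (Fin 3),
            ⟪(p.1 - Mμ) - (p.2 - Mν), Mμ - Mν⟫ ∂ρ)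
        + ‖Mμ - Mν‖ ^ 2 := by
    have he : (fun p : EuclideanSpace ℝ (Fin 3) × EuclideanSpace ℝ (Fin 3) => ‖p.1 - p.2‖ ^ 2)
        = fun p => ‖(p.1 - Mμ) - (p.2 - Mν)‖ ^ 2
            + 2 * ⟪(p.1 - Mμ) - (p.2 - Mν), Mμ - Mν⟫ + ‖Mμ - Mν‖ ^ 2 := by
      funext p
      have h : p.1 - p.2 = ((p.1 - Mμ) - (p.2 - Mν)) + (Mμ - Mν) := by abel
      rw [h, norm_add_sq_real]
    have h1 : Integrable (fun p : EuclideanSpace ℝ (Fin 3) × EuclideanSpace ℝ (Fin 3) =>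
        ‖(p.1 - Mμ) - (p.2 - Mν)‖ ^ 2 + 2 * ⟪(p.1 - Mμ) - (p.2 - Mν), Mμ - Mν⟫) ρ := by
      exact hZ2.add (hZc.const_mul 2)
    rw [he, integral_add h1 (integrable_const _), integral_add hZ2 (hZc.const_mul 2),
      integral_const_mul, integral_const, probReal_univ]
    simp
  have hcross : ∫ p : EuclideanSpace ℝ (Fin 3) × EuclideanSpace ℝ (Fin 3),
      ⟪(p.1 - Mμ) - (p.2 - Mν), Mμ - Mν⟫ ∂ρ = 0 := by
    have hza : Integrable (fun p : EuclideanSpace ℝ (Fin 3) × EuclideanSpace ℝ (Fin 3) =>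
        (p.1 - Mμ) - (p.2 - Mν)) ρ := hZ.integrable one_le_two
    have hzero : ∫ p : EuclideanSpace ℝ (Fin 3) × EuclideanSpace ℝ (Fin 3),
        ((p.1 - Mμ) - (p.2 - Mν)) ∂ρ = 0 := by
      rw [integral_sub (hX.integrable one_le_two) (hY.integrable one_le_two),
        integral_sub (hXm.integrable one_le_two) (integrable_const _),
        integral_sub (hYm.integrable one_le_two) (integrable_const _),
        integral_const, integral_const, probReal_univ, hmX, hmY]
      simp
    calc ∫ p : EuclideanSpace ℝ (Fin 3) × EuclideanSpace ℝ (Fin 3),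
          ⟪(p.1 - Mμ) - (p.2 - Mν), Mμ - Mν⟫ ∂ρ
        = ∫ p : EuclideanSpace ℝ (Fin 3) × EuclideanSpace ℝ (Fin 3),
          ⟪Mμ - Mν, (p.1 - Mμ) - (p.2 - Mν)⟫ ∂ρ := by
          simp_rw [real_inner_comm]
      _ = ⟪Mμ - Mν, ∫ p : EuclideanSpace ℝ (Fin 3) × EuclideanSpace ℝ (Fin 3),
          ((p.1 - Mμ) - (p.2 - Mν)) ∂ρ⟫ := integral_inner hza _
      _ = 0 := by rw [hzero]; simp
  rw [hdec, hcross]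
  have key := sq_sqrt_sub_le hX hY
  rw [hSμ, hSν] at key
  linarith
end

section
/- (Standardization bound.) Let x¹,…,x^N ∈ ℝ³ with empirical mean M = (1/N)∑_j x^j and variance S² = (1/N)∑_j |x^j − M|² > 0, and define y^i = (x^i − M)/S. Then (1/N)∑_i |x^i − y^i|² = (S−1)² + |M|². Consequently, for any μ ∈ P₂(ℝ³) with mean 0 and second moment 1, (1/N)∑_i |x^i − y^i|² ≤ W₂²(x̄, μ), where x̄ = (1/N)∑_i δ_{x^i} is the empirical measure. -/
open Real MeasureTheory
open scoped ENNReal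

section Helpers

open scoped RealInnerProductSpace

private lemma int_dirac' {F : Type*} [NormedAddCommGroup F] (f : EuclideanSpace ℝ (Fin 3) → F)
    (hf : Continuous f) (a : EuclideanSpace ℝ (Fin 3)) : Integrable f (Measure.dirac a) := by
  refine ⟨hf.aestronglyMeasurable, ?_⟩
  simp only [HasFiniteIntegral, lintegral_dirac]
  exact ENNReal.coe_lt_top

private lemma emp_integrable {N : ℕ} (hN : N ≠ 0) (x : Fin N → EuclideanSpace ℝ (Fin 3))
    {F : Type*} [NormedAddCommGroup F] (f : EuclideanSpace ℝ (Fin 3) → F) (hf : Continuous f) :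
    Integrable f ((N : ℝ≥0∞)⁻¹ • ∑ i, Measure.dirac (x i)) := by
  refine Integrable.smul_measure ?_ (by simp [hN])
  exact integrable_finset_sum_measure.2 fun i _ => int_dirac' f hf (x i)

private lemma emp_integral {N : ℕ} (hN : N ≠ 0) (x : Fin N → EuclideanSpace ℝ (Fin 3))
    {F : Type*} [NormedAddCommGroup F] [NormedSpace ℝ F] [CompleteSpace F]
    (f : EuclideanSpace ℝ (Fin 3) → F) (hf : Continuous f) :
    ∫ v, f v ∂((N : ℝ≥0∞)⁻¹ • ∑ i, Measure.dirac (x i))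
      = (N : ℝ)⁻¹ • ∑ i, f (x i) := by
  rw [integral_smul_measure,
    integral_finset_sum_measure (fun i _ => int_dirac' f hf (x i))]
  simp [integral_dirac, ENNReal.toReal_inv]

private lemma emp_prob {N : ℕ} (hN : N ≠ 0) (x : Fin N → EuclideanSpace ℝ (Fin 3)) :
    IsProbabilityMeasure ((N : ℝ≥0∞)⁻¹ • ∑ i, Measure.dirac (x i)) := by
  constructor
  simp only [Measure.smul_apply, Measure.finset_sum_apply, Measure.dirac_apply_of_mem
    (Set.mem_univ _), Finset.sum_const, Finset.card_univ, Fintype.card_fin, smul_eq_mul,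
    nsmul_eq_mul, mul_one]
  exact ENNReal.inv_mul_cancel (by simp [hN]) (by simp)

end Helpers

open scoped RealInnerProductSpace in
/-- Standardization bound: if `y^i = (x^i - M)/S` with `M, S` the empirical mean and
standard deviation (`S > 0`), then `(1/N)∑ |x^i - y^i|² = (S-1)² + |M|²`, which is
bounded by `W₂²(x̄, μ)` for any `μ` with mean `0` and second moment `1`. -/
theorem standardization_bound (N : ℕ) (hN : 1 ≤ N)
    (x y : Fin N → EuclideanSpace ℝ (Fin 3))
    (M : EuclideanSpace ℝ (Fin 3)) (hM : M = (N:ℝ)⁻¹ • ∑ i, x i)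
    (S : ℝ) (hS : S = Real.sqrt ((N:ℝ)⁻¹ * ∑ i, ‖x i - M‖ ^ 2)) (hSpos : 0 < S)
    (hy : ∀ i, y i = S⁻¹ • (x i - M))
    (μ : Measure (EuclideanSpace ℝ (Fin 3))) [IsProbabilityMeasure μ]
    (hμint : Integrable (fun v : EuclideanSpace ℝ (Fin 3) => ‖v‖ ^ 2) μ)
    (hμmean : (∫ v, v ∂μ) = 0) (hμ2 : (∫ v, ‖v‖ ^ 2 ∂μ) = 1) :
    (N:ℝ)⁻¹ * ∑ i, ‖x i - y i‖ ^ 2 = (S - 1) ^ 2 + ‖M‖ ^ 2 ∧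
    (N:ℝ)⁻¹ * ∑ i, ‖x i - y i‖ ^ 2
      ≤ W2sq ((N : ℝ≥0∞)⁻¹ • ∑ i, Measure.dirac (x i)) μ := by
  have hN0 : N ≠ 0 := by omega
  have hNR : (N:ℝ) ≠ 0 := by positivity
  have hSne : S ≠ 0 := ne_of_gt hSpos
  have hS2 : S ^ 2 = (N:ℝ)⁻¹ * ∑ i, ‖x i - M‖ ^ 2 := by
    rw [hS, Real.sq_sqrt]; positivity
  have hsum0 : ∑ i, (x i - M) = 0 := by
    have hx : ∑ i, x i = (N:ℝ) • M := by
      rw [hM, smul_inv_smul₀ hNR]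
    rw [Finset.sum_sub_distrib, hx, Finset.sum_const, Finset.card_univ, Fintype.card_fin,
      ← Nat.cast_smul_eq_nsmul ℝ, sub_self]
  have part1 : (N:ℝ)⁻¹ * ∑ i, ‖x i - y i‖ ^ 2 = (S - 1) ^ 2 + ‖M‖ ^ 2 := by
    have hid : ∀ i, ‖x i - y i‖ ^ 2
        = (1 - S⁻¹) ^ 2 * ‖x i - M‖ ^ 2 + 2 * (1 - S⁻¹) * ⟪x i - M, M⟫ + ‖M‖ ^ 2 := by
      intro i
      have hxy : x i - y i = (1 - S⁻¹) • (x i - M) + M := by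
        rw [hy i]; module
      rw [hxy, norm_add_sq_real, norm_smul, real_inner_smul_left, Real.norm_eq_abs,
        mul_pow, sq_abs]
      ring
    rw [Finset.sum_congr rfl fun i _ => hid i, Finset.sum_add_distrib, Finset.sum_add_distrib,
      ← Finset.mul_sum, ← Finset.mul_sum, ← sum_inner, hsum0, inner_zero_left,
      Finset.sum_const, Finset.card_univ, Fintype.card_fin, nsmul_eq_mul]
    have hSum : (∑ i, ‖x i - M‖ ^ 2) = N * S ^ 2 := by rw [hS2]; field_simp
    rw [hSum]
    field_simp
    ring
  refine ⟨part1, ?_⟩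
  rw [part1]
  haveI hxp : IsProbabilityMeasure ((N : ℝ≥0∞)⁻¹ • ∑ i, Measure.dirac (x i)) := emp_prob hN0 x
  haveI hne : Nonempty {πc : Measure (EuclideanSpace ℝ (Fin 3) × EuclideanSpace ℝ (Fin 3)) //
      πc.map Prod.fst = ((N : ℝ≥0∞)⁻¹ • ∑ i, Measure.dirac (x i)) ∧ πc.map Prod.snd = μ} := by
    refine ⟨⟨(((N : ℝ≥0∞)⁻¹ • ∑ i, Measure.dirac (x i)) : Measure _).prod μ, ?_, ?_⟩⟩
    · rw [Measure.map_fst_prod]; simp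
    · rw [Measure.map_snd_prod]; simp
  refine le_ciInf ?_
  rintro ⟨P, hfst, hsnd⟩
  -- P is a probability measure
  have hPuniv : P Set.univ = 1 := by
    have h := congrArg (fun m : Measure (EuclideanSpace ℝ (Fin 3)) => m Set.univ) hfst
    rwa [Measure.map_apply measurable_fst MeasurableSet.univ, Set.preimage_univ,
      hxp.measure_univ] at h
  haveI : IsProbabilityMeasure P := ⟨hPuniv⟩
  -- integrability of the identity under μ
  have hidμ : Integrable (fun v : EuclideanSpace ℝ (Fin 3) => v) μ := by
    refine Integrable.mono' ((integrable_const (1:ℝ)).add hμint) aestronglyMeasurable_id ?_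
    filter_upwards with v
    simp only [Pi.add_apply]
    nlinarith [sq_nonneg (‖v‖ - 1), norm_nonneg v]
  have hinnerμ : Integrable (fun v : EuclideanSpace ℝ (Fin 3) => ⟪v, M⟫) μ :=
    hidμ.inner_const M
  have hμmean' : ∫ v, ⟪v, M⟫ ∂μ = 0 := by
    calc ∫ v, ⟪v, M⟫ ∂μ = ∫ v, ⟪M, v⟫ ∂μ := by simp_rw [real_inner_comm]
      _ = ⟪M, ∫ v, v ∂μ⟫ := integral_inner hidμ M
      _ = 0 := by rw [hμmean, inner_zero_right]
  -- transfer integrals along the marginal conditions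
  have keyfst : ∀ g : EuclideanSpace ℝ (Fin 3) → ℝ, Continuous g →
      Integrable (fun p : EuclideanSpace ℝ (Fin 3) × EuclideanSpace ℝ (Fin 3) => g p.1) P ∧
      ∫ p, g p.1 ∂P = (N:ℝ)⁻¹ * ∑ i, g (x i) := by
    intro g hg
    have h1 : Integrable g (Measure.map Prod.fst P) := by
      rw [hfst]; exact emp_integrable hN0 x g hg
    refine ⟨(integrable_map_measure hg.aestronglyMeasurable measurable_fst.aemeasurable).1 h1, ?_⟩
    calc ∫ p, g p.1 ∂P
        = ∫ v, g v ∂(Measure.map Prod.fst P) :=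
          (integral_map measurable_fst.aemeasurable hg.aestronglyMeasurable).symm
      _ = (N:ℝ)⁻¹ * ∑ i, g (x i) := by
          rw [hfst, emp_integral hN0 x g hg, smul_eq_mul]
  have keysnd : ∀ g : EuclideanSpace ℝ (Fin 3) → ℝ, Continuous g → Integrable g μ →
      Integrable (fun p : EuclideanSpace ℝ (Fin 3) × EuclideanSpace ℝ (Fin 3) => g p.2) P ∧
      ∫ p, g p.2 ∂P = ∫ v, g v ∂μ := by
    intro g hg hgi
    have h1 : Integrable g (Measure.map Prod.snd P) := by rw [hsnd]; exact hgi
    refine ⟨(integrable_map_measure hg.aestronglyMeasurable measurable_snd.aemeasurable).1 h1, ?_⟩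
    calc ∫ p, g p.2 ∂P
        = ∫ v, g v ∂(Measure.map Prod.snd P) :=
          (integral_map measurable_snd.aemeasurable hg.aestronglyMeasurable).symm
      _ = ∫ v, g v ∂μ := by rw [hsnd]
  obtain ⟨i1, e1⟩ := keyfst (fun v => ‖v - M‖ ^ 2)
    ((continuous_id.sub continuous_const).norm.pow 2)
  obtain ⟨i1', e1'⟩ := keyfst (fun v => ‖v‖ ^ 2) (continuous_norm.pow 2)
  obtain ⟨i3, e3⟩ := keyfst (fun v => ⟪v - M, M⟫)
    (((continuous_id.sub continuous_const).inner continuous_const))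
  obtain ⟨i2, e2⟩ := keysnd (fun v => ‖v‖ ^ 2) (continuous_norm.pow 2) hμint
  obtain ⟨i4, e4⟩ := keysnd (fun v => ⟪v, M⟫) (continuous_id.inner continuous_const) hinnerμ
  -- evaluate the integrals
  have E1 : ∫ p : EuclideanSpace ℝ (Fin 3) × EuclideanSpace ℝ (Fin 3), ‖p.1 - M‖ ^ 2 ∂P
      = S ^ 2 := by rw [e1, ← hS2]
  have E2 : ∫ p : EuclideanSpace ℝ (Fin 3) × EuclideanSpace ℝ (Fin 3), ‖p.2‖ ^ 2 ∂P = 1 := by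
    rw [e2, hμ2]
  have E3 : ∫ p : EuclideanSpace ℝ (Fin 3) × EuclideanSpace ℝ (Fin 3), ⟪p.1 - M, M⟫ ∂P
      = 0 := by
    rw [e3, ← sum_inner, hsum0, inner_zero_left, mul_zero]
  have E4 : ∫ p : EuclideanSpace ℝ (Fin 3) × EuclideanSpace ℝ (Fin 3), ⟪p.2, M⟫ ∂P = 0 := by
    rw [e4, hμmean']
  -- the cost function is integrable
  have hcost : Integrable
      (fun p : EuclideanSpace ℝ (Fin 3) × EuclideanSpace ℝ (Fin 3) => ‖p.1 - p.2‖ ^ 2) P := by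
    refine Integrable.mono' ((i1'.const_mul 2).add (i2.const_mul 2))
      ((continuous_fst.sub continuous_snd).norm.pow 2).aestronglyMeasurable ?_
    filter_upwards with p
    rw [Real.norm_eq_abs, abs_of_nonneg (by positivity)]
    simp only [Pi.add_apply]
    nlinarith [norm_sub_le p.1 p.2, norm_nonneg p.1, norm_nonneg p.2,
      sq_nonneg (‖p.1‖ - ‖p.2‖), norm_nonneg (p.1 - p.2)]
  -- the lower bound function
  have hint : Integrable (fun p : EuclideanSpace ℝ (Fin 3) × EuclideanSpace ℝ (Fin 3) =>
      (1 - S⁻¹) * ‖p.1 - M‖ ^ 2 + (1 - S) * ‖p.2‖ ^ 2 + ‖M‖ ^ 2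
        + 2 * ⟪p.1 - M, M⟫ - 2 * ⟪p.2, M⟫) P :=
    ((((i1.const_mul _).add (i2.const_mul _)).add (integrable_const _)).add
      (i3.const_mul _)).sub (i4.const_mul _)
  have hpw : ∀ p : EuclideanSpace ℝ (Fin 3) × EuclideanSpace ℝ (Fin 3),
      (1 - S⁻¹) * ‖p.1 - M‖ ^ 2 + (1 - S) * ‖p.2‖ ^ 2 + ‖M‖ ^ 2
        + 2 * ⟪p.1 - M, M⟫ - 2 * ⟪p.2, M⟫ ≤ ‖p.1 - p.2‖ ^ 2 := by
    intro p
    have hab : p.1 - p.2 = (p.1 - M) - p.2 + M := by abel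
    have e : ‖p.1 - p.2‖ ^ 2 = ‖p.1 - M‖ ^ 2 - 2 * ⟪p.1 - M, p.2⟫ + ‖p.2‖ ^ 2
        + 2 * ⟪(p.1 - M) - p.2, M⟫ + ‖M‖ ^ 2 := by
      rw [hab, norm_add_sq_real, norm_sub_sq_real]
    have hCS : ⟪p.1 - M, p.2⟫ ≤ ‖p.1 - M‖ * ‖p.2‖ := real_inner_le_norm _ _
    have hkey : S⁻¹ * (‖p.1 - M‖ - S * ‖p.2‖) ^ 2
        = S⁻¹ * ‖p.1 - M‖ ^ 2 - 2 * (‖p.1 - M‖ * ‖p.2‖) + S * ‖p.2‖ ^ 2 := by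
      field_simp; ring
    have h0 : 0 ≤ S⁻¹ * (‖p.1 - M‖ - S * ‖p.2‖) ^ 2 := by positivity
    have hsub : ⟪(p.1 - M) - p.2, M⟫ = ⟪p.1 - M, M⟫ - ⟪p.2, M⟫ := inner_sub_left _ _ _
    rw [e, hsub]
    linarith
  have hinth : ∫ p : EuclideanSpace ℝ (Fin 3) × EuclideanSpace ℝ (Fin 3),
      ((1 - S⁻¹) * ‖p.1 - M‖ ^ 2 + (1 - S) * ‖p.2‖ ^ 2 + ‖M‖ ^ 2
        + 2 * ⟪p.1 - M, M⟫ - 2 * ⟪p.2, M⟫) ∂P = (S - 1) ^ 2 + ‖M‖ ^ 2 := by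
    have I1 : Integrable (fun p : EuclideanSpace ℝ (Fin 3) × EuclideanSpace ℝ (Fin 3) =>
        (1 - S⁻¹) * ‖p.1 - M‖ ^ 2) P := i1.const_mul _
    have I2 : Integrable (fun p : EuclideanSpace ℝ (Fin 3) × EuclideanSpace ℝ (Fin 3) =>
        (1 - S) * ‖p.2‖ ^ 2) P := i2.const_mul _
    have I3 : Integrable (fun p : EuclideanSpace ℝ (Fin 3) × EuclideanSpace ℝ (Fin 3) =>
        2 * ⟪p.1 - M, M⟫) P := i3.const_mul _
    have I4 : Integrable (fun p : EuclideanSpace ℝ (Fin 3) × EuclideanSpace ℝ (Fin 3) =>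
        2 * ⟪p.2, M⟫) P := i4.const_mul _
    have Ic : Integrable (fun _ : EuclideanSpace ℝ (Fin 3) × EuclideanSpace ℝ (Fin 3) =>
        ‖M‖ ^ 2) P := integrable_const _
    have I12 : Integrable (fun p : EuclideanSpace ℝ (Fin 3) × EuclideanSpace ℝ (Fin 3) =>
        (1 - S⁻¹) * ‖p.1 - M‖ ^ 2 + (1 - S) * ‖p.2‖ ^ 2) P := I1.add I2
    have I123 : Integrable (fun p : EuclideanSpace ℝ (Fin 3) × EuclideanSpace ℝ (Fin 3) =>
        (1 - S⁻¹) * ‖p.1 - M‖ ^ 2 + (1 - S) * ‖p.2‖ ^ 2 + ‖M‖ ^ 2) P := I12.add Ic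
    have I1234 : Integrable (fun p : EuclideanSpace ℝ (Fin 3) × EuclideanSpace ℝ (Fin 3) =>
        (1 - S⁻¹) * ‖p.1 - M‖ ^ 2 + (1 - S) * ‖p.2‖ ^ 2 + ‖M‖ ^ 2 + 2 * ⟪p.1 - M, M⟫) P :=
      I123.add I3
    rw [integral_sub I1234 I4, integral_add I123 I3, integral_add I12 Ic, integral_add I1 I2,
      integral_const_mul, integral_const_mul, integral_const_mul, integral_const_mul,
      integral_const, E1, E2, E3, E4]
    simp only [measure_univ, probReal_univ, ENNReal.toReal_one, smul_eq_mul, one_mul, mul_zero,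
      add_zero, sub_zero]
    field_simp
    ring
  calc (S - 1) ^ 2 + ‖M‖ ^ 2
      = ∫ p : EuclideanSpace ℝ (Fin 3) × EuclideanSpace ℝ (Fin 3),
          ((1 - S⁻¹) * ‖p.1 - M‖ ^ 2 + (1 - S) * ‖p.2‖ ^ 2 + ‖M‖ ^ 2
            + 2 * ⟪p.1 - M, M⟫ - 2 * ⟪p.2, M⟫) ∂P := hinth.symm
    _ ≤ ∫ p : EuclideanSpace ℝ (Fin 3) × EuclideanSpace ℝ (Fin 3), ‖p.1 - p.2‖ ^ 2 ∂P :=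
        integral_mono hint hcost hpw
end
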